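/- arXiv:1606.04877 — 7 statements merged into one kernel-verified Lean document; each statement's English description precedes it below -/
import Mathlib

section
/- Let R be a commutative ring, N a positive integer, and for j ≥ 0 let h_j denote the j-th complete homogeneous symmetric polynomial in the variables X₁, …, X_N over R (the sum of all monomials of degree j), and for n ≥ 1 let p_n = X₁ⁿ + ⋯ + X_Nⁿ be the n-th power sum. Then for every integer k ≥ 1, k · h_k = Σ_{n=1}^{k} h_{k−n} · p_n as an identity in the polynomial ring R[X₁, …, X_N]. -/
open MvPolynomial

/-- The `j`-th complete homogeneous symmetric polynomial in `N` variables over `R`: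
the sum of all monomials of total degree `j`. -/
noncomputable def hsymPoly (R : Type*) [CommRing R] (N : ℕ) (j : ℕ) :
    MvPolynomial (Fin N) R :=
  ∑ m ∈ (Finset.univ : Finset (Fin N)).sym j,
    ((m : Multiset (Fin N)).map MvPolynomial.X).prod

/-- **Newton–Girard identity** for complete homogeneous symmetric polynomials:
`k · h_k = ∑_{n=1}^{k} h_{k-n} p_n` where `p_n = X₁ⁿ + ⋯ + X_Nⁿ`. -/
theorem newton_identity_hsym (R : Type*) [CommRing R] (N : ℕ) (hN : 0 < N)
    (k : ℕ) (hk : 1 ≤ k) :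
    (k : MvPolynomial (Fin N) R) * hsymPoly R N k =
      ∑ n ∈ Finset.Icc 1 k, hsymPoly R N (k - n) * MvPolynomial.psum (Fin N) R n := by
  classical
  -- Expand the LHS as a triple sum over (μ, i, n)
  have hL : (k : MvPolynomial (Fin N) R) * hsymPoly R N k =
      ∑ μ ∈ (Finset.univ : Finset (Fin N)).sym k, ∑ i : Fin N,
        ∑ _n ∈ Finset.Icc 1 ((μ : Multiset (Fin N)).count i),
          ((μ : Multiset (Fin N)).map MvPolynomial.X).prod := by
    rw [hsymPoly, Finset.mul_sum]
    refine Finset.sum_congr rfl fun μ _ => ?_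
    have hcard : ∑ i : Fin N, (μ : Multiset (Fin N)).count i = k :=
      ((Finset.sum_subset (Finset.subset_univ _)
        (fun x _ hx => Multiset.count_eq_zero.2 (by simpa using hx))).symm.trans
        (Multiset.toFinset_sum_count_eq _)).trans μ.2
    calc (k : MvPolynomial (Fin N) R) * ((μ : Multiset (Fin N)).map MvPolynomial.X).prod
        = (∑ i : Fin N, (μ : Multiset (Fin N)).count i) •
            ((μ : Multiset (Fin N)).map MvPolynomial.X).prod := by
          rw [hcard, nsmul_eq_mul]
      _ = ∑ i : Fin N, ((μ : Multiset (Fin N)).count i) •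
            ((μ : Multiset (Fin N)).map MvPolynomial.X).prod := by
          rw [Finset.sum_smul]
      _ = _ := by
          refine Finset.sum_congr rfl fun i _ => ?_
          rw [Finset.sum_const, Nat.card_Icc, Nat.add_sub_cancel]
  have hR : ∑ n ∈ Finset.Icc 1 k, hsymPoly R N (k - n) * MvPolynomial.psum (Fin N) R n =
      ∑ n ∈ Finset.Icc 1 k, ∑ m ∈ (Finset.univ : Finset (Fin N)).sym (k - n), ∑ i : Fin N,
        ((m : Multiset (Fin N)).map MvPolynomial.X).prod * MvPolynomial.X i ^ n := by
    refine Finset.sum_congr rfl fun n _ => ?_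
    rw [hsymPoly, psum, Finset.sum_mul_sum]
  rw [hL, hR]
  rw [Finset.sum_sigma', Finset.sum_sigma', Finset.sum_sigma', Finset.sum_sigma']
  refine Finset.sum_bij'
    (fun a ha => ⟨⟨a.2, ⟨(a.1.1 : Multiset (Fin N)) - Multiset.replicate a.2 a.1.2, ?_⟩⟩, a.1.2⟩)
    (fun b hb => ⟨⟨⟨(b.1.2 : Multiset (Fin N)) + Multiset.replicate b.1.1 b.2, ?_⟩, b.2⟩, b.1.1⟩)
    ?_ ?_ ?_ ?_ ?_
  · -- card proof for forward map
    simp only [Finset.mem_sigma] at ha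
    have hn : a.2 ≤ (a.1.1 : Multiset (Fin N)).count a.1.2 :=
      (Finset.mem_Icc.mp ha.2).2
    have hle : Multiset.replicate a.2 a.1.2 ≤ (a.1.1 : Multiset (Fin N)) :=
      Multiset.le_count_iff_replicate_le.mp hn
    rw [Multiset.card_sub hle, Multiset.card_replicate, show Multiset.card (a.1.1 : Multiset (Fin N)) = k from a.1.1.2]
  · -- card proof for backward map
    simp only [Finset.mem_sigma, Finset.mem_Icc] at hb
    rw [Multiset.card_add, Multiset.card_replicate, show Multiset.card (b.1.2 : Multiset (Fin N)) = k - b.1.1 from b.1.2.2, Nat.sub_add_cancel hb.1.1.2]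
  · -- forward map lands in target
    intro a ha
    simp only [Finset.mem_sigma] at ha ⊢
    obtain ⟨hn1, hn2⟩ := Finset.mem_Icc.mp ha.2
    refine ⟨⟨Finset.mem_Icc.mpr ⟨hn1, ?_⟩, Finset.mem_sym_iff.mpr fun _ _ => Finset.mem_univ _⟩, Finset.mem_univ _⟩
    calc a.2 ≤ (a.1.1 : Multiset (Fin N)).count a.1.2 := hn2
      _ ≤ Multiset.card (a.1.1 : Multiset (Fin N)) := Multiset.count_le_card _ _
      _ = k := a.1.1.2
  · -- backward map lands in source
    intro b hb
    simp only [Finset.mem_sigma, Finset.mem_Icc] at hb ⊢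
    refine ⟨⟨Finset.mem_sym_iff.mpr fun _ _ => Finset.mem_univ _, Finset.mem_univ _⟩, ?_, ?_⟩
    · calc 1 ≤ b.1.1 := hb.1.1.1
        _ ≤ _ := by simp [Multiset.count_replicate]
    · simp [Multiset.count_replicate]
  · -- left inverse
    intro a ha
    simp only [Finset.mem_sigma] at ha
    have hn : a.2 ≤ (a.1.1 : Multiset (Fin N)).count a.1.2 :=
      (Finset.mem_Icc.mp ha.2).2
    have hle : Multiset.replicate a.2 a.1.2 ≤ (a.1.1 : Multiset (Fin N)) :=
      Multiset.le_count_iff_replicate_le.mp hn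
    obtain ⟨⟨μ, i⟩, n⟩ := a
    simp only at hle ⊢
    congr 1
    congr 1
    exact Subtype.ext (tsub_add_cancel_of_le hle)
  · -- right inverse
    intro b hb
    obtain ⟨⟨n, m⟩, i⟩ := b
    simp only
    congr 1
    congr 1
    exact Subtype.ext (by simp)
  · -- terms agree
    intro a ha
    simp only [Finset.mem_sigma] at ha
    have hn : a.2 ≤ (a.1.1 : Multiset (Fin N)).count a.1.2 :=
      (Finset.mem_Icc.mp ha.2).2
    have hle : Multiset.replicate a.2 a.1.2 ≤ (a.1.1 : Multiset (Fin N)) :=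
      Multiset.le_count_iff_replicate_le.mp hn
    conv_lhs => rw [← tsub_add_cancel_of_le hle]
    simp [Multiset.prod_replicate]
end

section
/- Let χ be a Dirichlet character mod q, and for each integer j ≥ 0 define F_{Ω_j}(s, χ) = Σ_{n ≥ 1, Ω(n) = j} χ(n) n^{−s} (so F_{Ω_0}(s, χ) = 1), and define F(s, χ) = Σ_{p prime} χ(p) p^{−s}. Then for every complex s with Re(s) > 1, all of these series converge absolutely, and for every integer k ≥ 1 one has k · F_{Ω_k}(s, χ) = Σ_{n=1}^{k} F_{Ω_{k−n}}(s, χ) · F(ns, χⁿ). -/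
open Complex

/-- The `n`-th term of the Dirichlet series `F_{Ω_j}(s, χ) = ∑_{n ≥ 1, Ω(n) = j} χ(n) n^{-s}`. -/
noncomputable def FOmegaTerm (q : ℕ) (χ : DirichletCharacter ℂ q) (s : ℂ) (j : ℕ) (n : ℕ) : ℂ :=
  if 1 ≤ n ∧ ArithmeticFunction.cardFactors n = j then χ (n : ZMod q) * (n : ℂ) ^ (-s) else 0

/-- The `p`-th term of `F(ns, χⁿ) = ∑_p χⁿ(p) p^{-ns}`. -/
noncomputable def FPrimeTerm (q : ℕ) (χ : DirichletCharacter ℂ q) (s : ℂ) (n : ℕ)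
    (p : Nat.Primes) : ℂ :=
  (χ ^ n) ((p : ℕ) : ZMod q) * ((p : ℕ) : ℂ) ^ (-((n : ℂ) * s))

/-- `Ω M = ∑_{p | M} v_p(M)`. -/
lemma FOmega_aux_omega_eq_sum (M : ℕ) :
    ArithmeticFunction.cardFactors M = ∑ p ∈ M.primeFactors, M.factorization p := by
  rw [ArithmeticFunction.cardFactors_apply, ← Nat.toFinset_factors]
  have h : ∀ p ∈ M.primeFactorsList.toFinset,
      M.factorization p = M.primeFactorsList.count p :=
    fun p _ => Nat.primeFactorsList_count_eq.symm
  rw [Finset.sum_congr rfl h]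
  simpa using (Multiset.toFinset_sum_count_eq (M.primeFactorsList : Multiset ℕ)).symm

/-- The finite set of pairs `(p, n)` with `p` prime, `1 ≤ n`, `p^n ∣ M`. -/
noncomputable def FOmegaDset (M : ℕ) : Finset (ℕ × ℕ) :=
  M.primeFactors.biUnion (fun p => (Finset.Icc 1 (M.factorization p)).image (fun n => (p, n)))

lemma FOmega_mem_Dset {M : ℕ} (hM : M ≠ 0) {pn : ℕ × ℕ} :
    pn ∈ FOmegaDset M ↔ pn.1.Prime ∧ 1 ≤ pn.2 ∧ pn.1 ^ pn.2 ∣ M := by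
  obtain ⟨p, n⟩ := pn
  simp only [FOmegaDset, Finset.mem_biUnion, Finset.mem_image, Finset.mem_Icc,
    Nat.mem_primeFactors]
  constructor
  · rintro ⟨p', ⟨hp', hdvd, _⟩, n', ⟨h1, h2⟩, heq⟩
    obtain ⟨rfl, rfl⟩ := Prod.ext_iff.mp heq
    exact ⟨hp', h1, (Nat.Prime.pow_dvd_iff_le_factorization hp' hM).mpr h2⟩
  · rintro ⟨hp, h1, hdvd⟩
    refine ⟨p, ⟨hp, (dvd_pow_self p (by omega)).trans hdvd, hM⟩, n,
      ⟨h1, (Nat.Prime.pow_dvd_iff_le_factorization hp hM).mp hdvd⟩, rfl⟩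

lemma FOmega_card_Dset (M : ℕ) :
    (FOmegaDset M).card = ArithmeticFunction.cardFactors M := by
  rw [FOmegaDset, Finset.card_biUnion, FOmega_aux_omega_eq_sum M]
  · refine Finset.sum_congr rfl fun p hp => ?_
    rw [Finset.card_image_of_injective _ (fun a b hab => (Prod.ext_iff.mp hab).2)]
    simp
  · intro p hp p' hp' hpp'
    simp only [Finset.disjoint_left, Finset.mem_image, Finset.mem_Icc]
    rintro a ⟨n, _, rfl⟩ ⟨n', _, ha⟩
    exact hpp' ((Prod.ext_iff.mp ha).1.symm)

noncomputable def FOmegaG (q : ℕ) (χ : DirichletCharacter ℂ q) (s : ℂ) (k : ℕ) :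
    ℕ × (ℕ × ℕ) → ℂ :=
  fun x => if x.2 ∈ FOmegaDset x.1 then FOmegaTerm q χ s k x.1 else 0

noncomputable def FOmegaH (q : ℕ) (χ : DirichletCharacter ℂ q) (s : ℂ) (k : ℕ) :
    ℕ × Nat.Primes → ℂ :=
  fun y => if 1 ≤ y.1 ∧ ArithmeticFunction.cardFactors y.1 < k then
    FOmegaTerm q χ s (ArithmeticFunction.cardFactors y.1) y.1 *
    FPrimeTerm q χ s (k - ArithmeticFunction.cardFactors y.1) y.2 else 0

/-- the key value computation -/
lemma FOmega_value_eq (q : ℕ) (χ : DirichletCharacter ℂ q) (s : ℂ) (k m p n : ℕ)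
    (hp : p.Prime) (hm : 1 ≤ m) (hn : 1 ≤ n)
    (hΩ : ArithmeticFunction.cardFactors m + n = k) :
    FOmegaTerm q χ s k (m * p ^ n) =
      FOmegaTerm q χ s (ArithmeticFunction.cardFactors m) m *
      FPrimeTerm q χ s n ⟨p, hp⟩ := by
  have hm0 : m ≠ 0 := by omega
  have hpn0 : p ^ n ≠ 0 := pow_ne_zero n hp.pos.ne'
  have hΩM : ArithmeticFunction.cardFactors (m * p ^ n) = k := by
    rw [ArithmeticFunction.cardFactors_mul hm0 hpn0,
      ArithmeticFunction.cardFactors_apply_prime_pow hp, hΩ]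
  rw [FOmegaTerm, if_pos ⟨Nat.one_le_iff_ne_zero.mpr (mul_ne_zero hm0 hpn0), hΩM⟩,
    FOmegaTerm, if_pos ⟨hm, rfl⟩]
  unfold FPrimeTerm
  have hcast : ((m * p ^ n : ℕ) : ZMod q) = (m : ZMod q) * ((p : ZMod q)) ^ n := by push_cast; ring
  have hχ : χ ((m * p ^ n : ℕ) : ZMod q) = χ (m : ZMod q) * (χ ^ n) ((p : ZMod q)) := by
    rw [hcast, map_mul, map_pow, MulChar.pow_apply' χ (by omega) _]
  have hpow : ((m * p ^ n : ℕ) : ℂ) ^ (-s) = (m : ℂ) ^ (-s) * (p : ℂ) ^ (-((n : ℂ) * s)) := by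
    have h1 : ((m * p ^ n : ℕ) : ℂ) = ((m : ℕ) : ℂ) * ((p ^ n : ℕ) : ℂ) := by push_cast; ring
    rw [h1, natCast_mul_natCast_cpow]
    congr 1
    have h2 : ((p ^ n : ℕ) : ℂ) = ((p : ℕ) : ℂ) ^ n := by push_cast; ring
    rw [h2, ← natCast_cpow_natCast_mul, mul_neg]
  rw [hχ, hpow]
  push_cast
  ring

lemma FOmegaTerm_eq_zero {q : ℕ} {χ : DirichletCharacter ℂ q} {s : ℂ} {j m : ℕ}
    (h : ¬(1 ≤ m ∧ ArithmeticFunction.cardFactors m = j)) : FOmegaTerm q χ s j m = 0 :=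
  if_neg h

lemma FOmega_summable (q : ℕ) (χ : DirichletCharacter ℂ q) (s : ℂ) (hs : 1 < s.re) (j : ℕ) :
    Summable (fun n : ℕ => ‖FOmegaTerm q χ s j n‖) := by
  apply Summable.of_nonneg_of_le (fun n => norm_nonneg _)
    (f := fun n : ℕ => (n : ℝ) ^ (-s.re))
  · intro n
    unfold FOmegaTerm
    split_ifs with h
    · have hn : 0 < n := h.1
      rw [norm_mul, norm_natCast_cpow_of_pos hn, neg_re]
      calc ‖χ (n : ZMod q)‖ * (n:ℝ) ^ (-s.re) ≤ 1 * (n:ℝ) ^ (-s.re) := by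
            exact mul_le_mul_of_nonneg_right (DirichletCharacter.norm_le_one χ _)
              (Real.rpow_nonneg (Nat.cast_nonneg n) _)
        _ = (n:ℝ) ^ (-s.re) := one_mul _
    · simp [Real.rpow_nonneg (Nat.cast_nonneg n)]
  · exact Real.summable_nat_rpow.mpr (by linarith)

lemma FPrime_summable (q : ℕ) (χ : DirichletCharacter ℂ q) (s : ℂ) (hs : 1 < s.re) (n : ℕ)
    (hn : 1 ≤ n) : Summable (fun p : Nat.Primes => ‖FPrimeTerm q χ s n p‖) := by
  apply Summable.of_nonneg_of_le (fun p => norm_nonneg _)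
    (f := fun p : Nat.Primes => ((p : ℕ) : ℝ) ^ (-s.re))
  · intro p
    have hp : 0 < (p : ℕ) := p.2.pos
    unfold FPrimeTerm
    rw [norm_mul, norm_natCast_cpow_of_pos hp]
    have h1 : ((-((n : ℂ) * s)).re) = -(n * s.re) := by simp [mul_re]
    rw [h1]
    have h2 : ((p:ℕ):ℝ) ^ (-(n * s.re)) ≤ ((p:ℕ):ℝ) ^ (-s.re) := by
      apply Real.rpow_le_rpow_of_exponent_le
      · exact_mod_cast p.2.one_lt.le
      · nlinarith [(show (1:ℝ) ≤ n by exact_mod_cast hn)]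
    calc ‖(χ ^ n) ((p:ℕ) : ZMod q)‖ * ((p:ℕ):ℝ) ^ (-(n * s.re))
        ≤ 1 * ((p:ℕ):ℝ) ^ (-(n * s.re)) :=
          mul_le_mul_of_nonneg_right (DirichletCharacter.norm_le_one _ _)
            (Real.rpow_nonneg (Nat.cast_nonneg _) _)
      _ ≤ ((p:ℕ):ℝ) ^ (-s.re) := by rw [one_mul]; exact h2
  · exact Nat.Primes.summable_rpow.mpr (by linarith)


/-- **Recursion for `F_{Ω_k}`** (Meng, eq. (2.5)): for `Re(s) > 1` all the series converge
absolutely and `k F_{Ω_k}(s, χ) = ∑_{n=1}^{k} F_{Ω_{k-n}}(s, χ) F(ns, χⁿ)`. -/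
theorem FOmega_recursion (q : ℕ) (χ : DirichletCharacter ℂ q) (s : ℂ) (hs : 1 < s.re) :
    (∀ j : ℕ, Summable (fun n : ℕ => ‖FOmegaTerm q χ s j n‖)) ∧
    (∀ n : ℕ, 1 ≤ n → Summable (fun p : Nat.Primes => ‖FPrimeTerm q χ s n p‖)) ∧
    (∀ k : ℕ, 1 ≤ k →
      (k : ℂ) * ∑' n : ℕ, FOmegaTerm q χ s k n =
        ∑ n ∈ Finset.Icc 1 k,
          (∑' m : ℕ, FOmegaTerm q χ s (k - n) m) * (∑' p : Nat.Primes, FPrimeTerm q χ s n p)) := by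
  refine ⟨FOmega_summable q χ s hs, FPrime_summable q χ s hs, ?_⟩
  intro k hk
  -- RHS manipulations
  have rhs1 : ∑ n ∈ Finset.Icc 1 k,
      (∑' m : ℕ, FOmegaTerm q χ s (k - n) m) * (∑' p : Nat.Primes, FPrimeTerm q χ s n p)
      = ∑ n ∈ Finset.Icc 1 k, ∑' x : ℕ × Nat.Primes,
          FOmegaTerm q χ s (k - n) x.1 * FPrimeTerm q χ s n x.2 :=
    Finset.sum_congr rfl fun n hn =>
      tsum_mul_tsum_of_summable_norm (FOmega_summable q χ s hs _)
        (FPrime_summable q χ s hs n (Finset.mem_Icc.mp hn).1)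
  have rhs2 : ∑ n ∈ Finset.Icc 1 k, (∑' x : ℕ × Nat.Primes,
        FOmegaTerm q χ s (k - n) x.1 * FPrimeTerm q χ s n x.2)
      = ∑' x : ℕ × Nat.Primes, ∑ n ∈ Finset.Icc 1 k,
          FOmegaTerm q χ s (k - n) x.1 * FPrimeTerm q χ s n x.2 :=
    (Summable.tsum_finsetSum fun n hn =>
      summable_mul_of_summable_norm (FOmega_summable q χ s hs _)
        (FPrime_summable q χ s hs n (Finset.mem_Icc.mp hn).1)).symm
  have rhs3 : ∀ x : ℕ × Nat.Primes,
      (∑ n ∈ Finset.Icc 1 k, FOmegaTerm q χ s (k - n) x.1 * FPrimeTerm q χ s n x.2)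
        = FOmegaH q χ s k x := by
    rintro ⟨m, p⟩
    simp only [FOmegaH]
    by_cases hm : 1 ≤ m ∧ ArithmeticFunction.cardFactors m < k
    · rw [if_pos hm]
      have h0 : ∀ n ∈ Finset.Icc 1 k, n ≠ k - ArithmeticFunction.cardFactors m →
          FOmegaTerm q χ s (k - n) m * FPrimeTerm q χ s n p = 0 := by
        intro n hn hne
        have hmem := Finset.mem_Icc.mp hn
        rw [FOmegaTerm_eq_zero (by rintro ⟨-, h2⟩; omega), zero_mul]
      have h1 : k - (k - ArithmeticFunction.cardFactors m) = ArithmeticFunction.cardFactors m := by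
        omega
      rw [Finset.sum_eq_single _ h0
        (fun hnot => absurd (Finset.mem_Icc.mpr ⟨by omega, by omega⟩) hnot), h1]
    · rw [if_neg hm]
      refine Finset.sum_eq_zero fun n hn => ?_
      have hmem := Finset.mem_Icc.mp hn
      rw [FOmegaTerm_eq_zero (by rintro ⟨h1, h2⟩; exact hm ⟨h1, by omega⟩), zero_mul]
  -- LHS manipulations
  have hG0 : ∀ M : ℕ, ∀ pn ∉ FOmegaDset M, FOmegaG q χ s k (M, pn) = 0 :=
    fun M pn hpn => if_neg hpn
  have hGpos : ∀ M : ℕ, ∀ pn ∈ FOmegaDset M, FOmegaG q χ s k (M, pn) = FOmegaTerm q χ s k M :=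
    fun M pn hpn => if_pos hpn
  have lhs2 : ∀ M : ℕ, (k:ℂ) * FOmegaTerm q χ s k M
      = ∑' pn : ℕ × ℕ, FOmegaG q χ s k (M, pn) := by
    intro M
    rw [tsum_eq_sum (hG0 M), Finset.sum_congr rfl (hGpos M), Finset.sum_const,
      FOmega_card_Dset, nsmul_eq_mul]
    by_cases hM : FOmegaTerm q χ s k M = 0
    · rw [hM, mul_zero, mul_zero]
    · have hcond : 1 ≤ M ∧ ArithmeticFunction.cardFactors M = k := by
        by_contra hc
        exact hM (if_neg hc)
      rw [hcond.2]
  have hGfin : ∀ M : ℕ, Summable fun pn : ℕ × ℕ => FOmegaG q χ s k (M, pn) :=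
    fun M => summable_of_ne_finset_zero (hG0 M)
  have hGnorm : Summable fun x : ℕ × (ℕ × ℕ) => ‖FOmegaG q χ s k x‖ := by
    rw [summable_prod_of_nonneg (fun x => norm_nonneg _)]
    constructor
    · intro M
      apply summable_of_ne_finset_zero (s := FOmegaDset M)
      intro pn hpn
      rw [hG0 M pn hpn, norm_zero]
    · apply Summable.of_nonneg_of_le (fun M => tsum_nonneg fun _ => norm_nonneg _)
        (f := fun M : ℕ => (k:ℝ) * ‖FOmegaTerm q χ s k M‖)
      · intro M
        rw [tsum_eq_sum (s := FOmegaDset M) (fun pn hpn => by rw [hG0 M pn hpn, norm_zero]),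
          Finset.sum_congr rfl (fun pn hpn => by rw [hGpos M pn hpn]),
          Finset.sum_const, FOmega_card_Dset, nsmul_eq_mul]
        by_cases hM : FOmegaTerm q χ s k M = 0
        · rw [hM, norm_zero, mul_zero, mul_zero]
        · have hcond : 1 ≤ M ∧ ArithmeticFunction.cardFactors M = k := by
            by_contra hc
            exact hM (if_neg hc)
          rw [hcond.2]
      · exact (FOmega_summable q χ s hs k).mul_left _
  have hGsum : Summable (FOmegaG q χ s k) := hGnorm.of_norm
  have lhs3 : (∑' M : ℕ, ∑' pn : ℕ × ℕ, FOmegaG q χ s k (M, pn))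
      = ∑' x : ℕ × (ℕ × ℕ), FOmegaG q χ s k x := (Summable.tsum_prod' hGsum hGfin).symm
  -- the key bijection step
  have key : ∑' x : ℕ × (ℕ × ℕ), FOmegaG q χ s k x
      = ∑' y : ℕ × Nat.Primes, FOmegaH q χ s k y := by
    refine tsum_eq_tsum_of_ne_zero_bij
      (fun y => ((y : ℕ × Nat.Primes).1 *
          ((y : ℕ × Nat.Primes).2 : ℕ) ^ (k - ArithmeticFunction.cardFactors (y : ℕ × Nat.Primes).1),
        (((y : ℕ × Nat.Primes).2 : ℕ),
          k - ArithmeticFunction.cardFactors (y : ℕ × Nat.Primes).1))) ?_ ?_ ?_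
    · rintro ⟨⟨m1, p1⟩, hy1⟩ ⟨⟨m2, p2⟩, hy2⟩ heq
      simp only [Prod.mk.injEq] at heq
      obtain ⟨h1, h2, h3⟩ := heq
      have hp : p1 = p2 := Subtype.ext h2
      subst hp
      rw [h3] at h1
      have hmn : m1 = m2 := Nat.eq_of_mul_eq_mul_right (pow_pos p1.2.pos _) h1
      have hΩeq : ArithmeticFunction.cardFactors m1 = ArithmeticFunction.cardFactors m2 := by
        rw [hmn]
      exact Subtype.ext (Prod.ext_iff.mpr ⟨hmn, rfl⟩)
    · rintro ⟨M, p, n⟩ hx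
      have hx' : FOmegaG q χ s k (M, (p, n)) ≠ 0 := hx
      have hmem : (p, n) ∈ FOmegaDset M := by
        by_contra hc
        exact hx' (if_neg hc)
      have hA : FOmegaTerm q χ s k M ≠ 0 := fun h0 => hx' (by rw [hGpos M _ hmem, h0])
      have hcond : 1 ≤ M ∧ ArithmeticFunction.cardFactors M = k := by
        by_contra hc
        exact hA (if_neg hc)
      have hM0 : M ≠ 0 := by omega
      obtain ⟨hp, hn1, hdvd⟩ := (FOmega_mem_Dset hM0).mp hmem
      set m := M / p ^ n with hmdef
      have hMeq : M = m * p ^ n := (Nat.div_mul_cancel hdvd).symm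
      have hm0 : m ≠ 0 := by
        intro h0
        rw [h0, zero_mul] at hMeq
        exact hM0 hMeq
      have hΩm : ArithmeticFunction.cardFactors m + n = k := by
        rw [← hcond.2, hMeq, ArithmeticFunction.cardFactors_mul hm0 (pow_ne_zero n hp.pos.ne'),
          ArithmeticFunction.cardFactors_apply_prime_pow hp]
      have hnk : k - ArithmeticFunction.cardFactors m = n := by omega
      have hval : FOmegaH q χ s k (m, ⟨p, hp⟩) ≠ 0 := by
        have hHeq : FOmegaH q χ s k (m, ⟨p, hp⟩)
            = FOmegaTerm q χ s (ArithmeticFunction.cardFactors m) m *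
              FPrimeTerm q χ s n ⟨p, hp⟩ := by
          simp only [FOmegaH]
          rw [if_pos ⟨Nat.one_le_iff_ne_zero.mpr hm0, by omega⟩, hnk]
        rw [hHeq, ← FOmega_value_eq q χ s k m p n hp (Nat.one_le_iff_ne_zero.mpr hm0) hn1 hΩm,
          ← hMeq]
        exact hA
      refine ⟨⟨(m, ⟨p, hp⟩), hval⟩, ?_⟩
      simp only [hnk, ← hMeq]
    · rintro ⟨⟨m, P⟩, hy⟩
      have hy' : FOmegaH q χ s k (m, P) ≠ 0 := hy
      have hcond : 1 ≤ m ∧ ArithmeticFunction.cardFactors m < k := by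
        by_contra hc
        exact hy' (if_neg hc)
      have hn1 : 1 ≤ k - ArithmeticFunction.cardFactors m := by omega
      have hΩ : ArithmeticFunction.cardFactors m + (k - ArithmeticFunction.cardFactors m) = k := by
        omega
      have hmem : ((P:ℕ), k - ArithmeticFunction.cardFactors m)
          ∈ FOmegaDset (m * (P:ℕ) ^ (k - ArithmeticFunction.cardFactors m)) := by
        rw [FOmega_mem_Dset (mul_ne_zero (by omega) (pow_ne_zero _ P.2.pos.ne'))]
        exact ⟨P.2, hn1, dvd_mul_left _ _⟩
      show FOmegaG q χ s k _ = FOmegaH q χ s k (m, P)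
      rw [hGpos _ _ hmem,
        FOmega_value_eq q χ s k m (P:ℕ) (k - ArithmeticFunction.cardFactors m) P.2 hcond.1 hn1 hΩ]
      simp only [FOmegaH]
      rw [if_pos hcond]
      rfl
  calc (k : ℂ) * ∑' n : ℕ, FOmegaTerm q χ s k n
      = ∑' M : ℕ, (k:ℂ) * FOmegaTerm q χ s k M := tsum_mul_left.symm
    _ = ∑' M : ℕ, ∑' pn : ℕ × ℕ, FOmegaG q χ s k (M, pn) := tsum_congr lhs2
    _ = ∑' x : ℕ × (ℕ × ℕ), FOmegaG q χ s k x := lhs3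
    _ = ∑' y : ℕ × Nat.Primes, FOmegaH q χ s k y := key
    _ = ∑' x : ℕ × Nat.Primes, ∑ n ∈ Finset.Icc 1 k,
          FOmegaTerm q χ s (k - n) x.1 * FPrimeTerm q χ s n x.2 := (tsum_congr rhs3).symm
    _ = _ := by rw [← rhs2, ← rhs1]
end

section
/- Let χ be a Dirichlet character mod q, and for each integer j ≥ 0 define F_{ω_j}(s, χ) = Σ_{n ≥ 1, ω(n) = j} χ(n) n^{−s} (so F_{ω_0}(s, χ) = 1), and for each integer u ≥ 1 define F̃(s, χ; u) = Σ_{p prime} ( Σ_{m ≥ 1} χ(p^m) p^{−ms} )^u. Then for every complex s with Re(s) > 1, all of these series converge absolutely, and for every integer k ≥ 1 one has k · F_{ω_k}(s, χ) = Σ_{n=1}^{k} (−1)^{n−1} F_{ω_{k−n}}(s, χ) · F̃(s, χ; n). -/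
open Complex

/-- The `n`-th term of the Dirichlet series `F_{ω_j}(s, χ) = ∑_{n ≥ 1, ω(n) = j} χ(n) n^{-s}`. -/
noncomputable def FomegaTerm (q : ℕ) (χ : DirichletCharacter ℂ q) (s : ℂ) (j : ℕ) (n : ℕ) : ℂ :=
  if 1 ≤ n ∧ ArithmeticFunction.cardDistinctFactors n = j then χ (n : ZMod q) * (n : ℂ) ^ (-s)
  else 0

/-- The inner series `∑_{m ≥ 1} χ(p^m) p^{-ms}` at a prime `p`. -/
noncomputable def FtildeInner (q : ℕ) (χ : DirichletCharacter ℂ q) (s : ℂ) (p : Nat.Primes) : ℂ :=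
  ∑' m : ℕ, χ ((((p : ℕ) ^ (m + 1) : ℕ)) : ZMod q) * (((p : ℕ) : ℂ)) ^ (-(((m : ℂ) + 1) * s))

/-- `F̃(s, χ; u) = ∑_p (∑_{m ≥ 1} χ(p^m) p^{-ms})^u`. -/
noncomputable def Ftilde (q : ℕ) (χ : DirichletCharacter ℂ q) (s : ℂ) (u : ℕ) : ℂ :=
  ∑' p : Nat.Primes, (FtildeInner q χ s p) ^ u

namespace FomegaProofAux

/-! ### Number-theoretic helper lemmas -/

lemma omega_eq (n : ℕ) : (ArithmeticFunction.cardDistinctFactors n : ℕ) = n.primeFactors.card :=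
  rfl

lemma omega_pow_mul {p : ℕ} (hp : p.Prime) (a m : ℕ) (hm : m ≠ 0) (hpm : ¬ p ∣ m) :
    (ArithmeticFunction.cardDistinctFactors (p ^ (a+1) * m) : ℕ)
      = ArithmeticFunction.cardDistinctFactors m + 1 := by
  rw [omega_eq, omega_eq, Nat.primeFactors_mul (pow_ne_zero _ hp.pos.ne') hm,
    Nat.primeFactors_pow p (Nat.succ_ne_zero a), hp.primeFactors]
  have hnot : p ∉ m.primeFactors := fun h => hpm (Nat.dvd_of_mem_primeFactors h)
  rw [show ({p} ∪ m.primeFactors : Finset ℕ) = insert p m.primeFactors from rfl,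
    Finset.card_insert_of_notMem hnot, add_comm]

lemma decomp_unique {p : ℕ} (hp : p.Prime) {a b m m' : ℕ} (hm : ¬ p ∣ m) (hm' : ¬ p ∣ m')
    (hm0 : m ≠ 0) (h : p ^ (a+1) * m = p ^ (b+1) * m') : a = b ∧ m = m' := by
  have hm'0 : m' ≠ 0 := by
    intro h0
    rw [h0, mul_zero] at h
    exact (mul_ne_zero (pow_ne_zero _ hp.pos.ne') hm0) h
  have hfa := congrArg (fun t => t.factorization p) h
  simp only [Nat.factorization_mul (pow_ne_zero _ hp.pos.ne') hm0,
    Nat.factorization_mul (pow_ne_zero _ hp.pos.ne') hm'0, Finsupp.add_apply,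
    hp.factorization_pow, Finsupp.single_eq_same,
    Nat.factorization_eq_zero_of_not_dvd hm, Nat.factorization_eq_zero_of_not_dvd hm'] at hfa
  have hab : a = b := by omega
  subst hab
  exact ⟨rfl, Nat.eq_of_mul_eq_mul_left (pow_pos hp.pos _) h⟩

lemma decomp_exists {p n : ℕ} (hp : p.Prime) (hn : n ≠ 0) (hd : p ∣ n) :
    ∃ a m : ℕ, ¬ p ∣ m ∧ m ≠ 0 ∧ n = p ^ (a+1) * m := by
  refine ⟨n.factorization p - 1, n / p ^ n.factorization p,
    Nat.not_dvd_ordCompl hp hn, Nat.ordCompl_pos p hn |>.ne', ?_⟩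
  have hpos : 0 < n.factorization p := hp.factorization_pos_of_dvd hn hd
  have : n.factorization p - 1 + 1 = n.factorization p := by omega
  rw [this, Nat.ordProj_mul_ordCompl_eq_self]

lemma tsum_geom_succ {r : ℝ} (h0 : 0 ≤ r) (h1 : r < 1) :
    ∑' a : ℕ, r ^ (a+1) = (1 - r)⁻¹ * r := by
  simpa [pow_succ] using tsum_mul_right (a := r) (f := fun a : ℕ => r ^ a) |>.trans
    (by rw [tsum_geometric_of_lt_one h0 h1])

lemma rpow_nat_pow (p a : ℕ) (x : ℝ) : ((p ^ a : ℕ) : ℝ) ^ x = (((p:ℝ) ^ x) ^ a) := by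
  push_cast
  rw [← Real.rpow_natCast ((p:ℝ) ^ x) a, ← Real.rpow_natCast (p:ℝ) a,
    ← Real.rpow_mul (Nat.cast_nonneg p), ← Real.rpow_mul (Nat.cast_nonneg p), mul_comm]

section Main

variable (q : ℕ) (χ : DirichletCharacter ℂ q) (s : ℂ)

/-- The summand `χ(n) n^{-s}`. -/
noncomputable def f (n : ℕ) : ℂ := χ (n : ZMod q) * (n : ℂ) ^ (-s)

/-- Terms of `F_{ω_j}` restricted to `p ∤ n`. -/
noncomputable def Aterm (p j n : ℕ) : ℂ :=
  if 1 ≤ n ∧ ArithmeticFunction.cardDistinctFactors n = j ∧ ¬ p ∣ n then f q χ s n else 0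

/-- Terms of `F_{ω_j}` restricted to `p ∣ n`. -/
noncomputable def Bterm (p j n : ℕ) : ℂ :=
  if 1 ≤ n ∧ ArithmeticFunction.cardDistinctFactors n = j ∧ p ∣ n then f q χ s n else 0

lemma f_mul (a b : ℕ) : f q χ s (a * b) = f q χ s a * f q χ s b := by
  simp only [f, Nat.cast_mul, map_mul, Complex.natCast_mul_natCast_cpow]
  ring

lemma f_one : f q χ s 1 = 1 := by simp [f]

lemma norm_f_le {n : ℕ} (hn : 1 ≤ n) : ‖f q χ s n‖ ≤ (n : ℝ) ^ (-s.re) := by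
  rw [f, norm_mul, Complex.norm_natCast_cpow_of_pos hn, neg_re]
  calc ‖χ (n : ZMod q)‖ * (n:ℝ) ^ (-s.re) ≤ 1 * (n:ℝ) ^ (-s.re) := by
        exact mul_le_mul_of_nonneg_right (DirichletCharacter.norm_le_one χ _)
          (Real.rpow_nonneg (Nat.cast_nonneg n) _)
    _ = (n:ℝ) ^ (-s.re) := one_mul _

lemma summable_norm_of_le (hs : 1 < s.re) {h : ℕ → ℂ}
    (hb : ∀ n, ‖h n‖ ≤ (n : ℝ) ^ (-s.re)) : Summable fun n => ‖h n‖ :=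
  Summable.of_nonneg_of_le (fun _ => norm_nonneg _) hb
    (Real.summable_nat_rpow.mpr (by linarith))

lemma bound_Fterm (j n : ℕ) : ‖FomegaTerm q χ s j n‖ ≤ (n : ℝ) ^ (-s.re) := by
  rw [FomegaTerm]
  split_ifs with h
  · exact norm_f_le q χ s h.1
  · simpa using Real.rpow_nonneg (Nat.cast_nonneg n) _

lemma bound_Aterm (p j n : ℕ) : ‖Aterm q χ s p j n‖ ≤ (n : ℝ) ^ (-s.re) := by
  rw [Aterm]
  split_ifs with h
  · exact norm_f_le q χ s h.1
  · simpa using Real.rpow_nonneg (Nat.cast_nonneg n) _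

lemma bound_Bterm (p j n : ℕ) : ‖Bterm q χ s p j n‖ ≤ (n : ℝ) ^ (-s.re) := by
  rw [Bterm]
  split_ifs with h
  · exact norm_f_le q χ s h.1
  · simpa using Real.rpow_nonneg (Nat.cast_nonneg n) _

lemma summable_Fterm (hs : 1 < s.re) (j : ℕ) :
    Summable fun n => ‖FomegaTerm q χ s j n‖ :=
  summable_norm_of_le s hs (bound_Fterm q χ s j)

lemma summable_Aterm (hs : 1 < s.re) (p j : ℕ) :
    Summable fun n => ‖Aterm q χ s p j n‖ :=
  summable_norm_of_le s hs (bound_Aterm q χ s p j)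

lemma summable_Bterm (hs : 1 < s.re) (p j : ℕ) :
    Summable fun n => ‖Bterm q χ s p j n‖ :=
  summable_norm_of_le s hs (bound_Bterm q χ s p j)

lemma Fterm_split (p j n : ℕ) :
    FomegaTerm q χ s j n = Aterm q χ s p j n + Bterm q χ s p j n := by
  rw [FomegaTerm, Aterm, Bterm]
  by_cases h1 : 1 ≤ n ∧ ArithmeticFunction.cardDistinctFactors n = j
  · by_cases hd : p ∣ n
    · rw [if_pos h1, if_neg (by tauto), if_pos ⟨h1.1, h1.2, hd⟩, zero_add, f]
    · rw [if_pos h1, if_pos ⟨h1.1, h1.2, hd⟩, if_neg (by tauto), add_zero, f]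
  · rw [if_neg h1, if_neg (by tauto), if_neg (by tauto), add_zero]

/-! ### The inner series at a prime -/

lemma f_pow_eq (p m : ℕ) :
    χ (((p ^ (m + 1) : ℕ)) : ZMod q) * ((p : ℂ)) ^ (-(((m : ℂ) + 1) * s))
      = f q χ s (p ^ (m + 1)) := by
  rw [f]
  congr 1
  have : (-(((m : ℂ) + 1) * s)) = ((m + 1 : ℕ) : ℂ) * (-s) := by push_cast; ring
  rw [this, Complex.natCast_cpow_natCast_mul]
  push_cast
  rfl

lemma r_lt_one {p : ℕ} (hp : 2 ≤ p) (hs : 1 < s.re) : (p:ℝ) ^ (-s.re) < 1 :=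
  Real.rpow_lt_one_of_one_lt_of_neg (by exact_mod_cast Nat.lt_of_lt_of_le one_lt_two hp)
    (by linarith)

lemma norm_f_pow_le (p : ℕ) (hp : 1 ≤ p) (a : ℕ) :
    ‖f q χ s (p ^ (a+1))‖ ≤ ((p:ℝ) ^ (-s.re)) ^ (a+1) := by
  have h1 : 1 ≤ p ^ (a+1) := Nat.one_le_pow _ _ hp
  calc ‖f q χ s (p ^ (a+1))‖ ≤ ((p ^ (a+1) : ℕ) : ℝ) ^ (-s.re) := by
        rw [f, norm_mul, Complex.norm_natCast_cpow_of_pos h1, neg_re]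
        exact mul_le_mul_of_nonneg_right (DirichletCharacter.norm_le_one χ _)
          (Real.rpow_nonneg (Nat.cast_nonneg _) _) |>.trans_eq (one_mul _)
    _ = ((p:ℝ) ^ (-s.re)) ^ (a+1) := rpow_nat_pow p (a+1) (-s.re)

lemma summable_norm_f_pow (hs : 1 < s.re) {p : ℕ} (hp : 2 ≤ p) :
    Summable fun a : ℕ => ‖f q χ s (p ^ (a+1))‖ := by
  have hr0 : 0 ≤ (p:ℝ) ^ (-s.re) := Real.rpow_nonneg (Nat.cast_nonneg p) _
  apply Summable.of_nonneg_of_le (fun _ => norm_nonneg _)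
    (norm_f_pow_le q χ s p (le_trans one_le_two hp))
  simpa [pow_succ] using
    (summable_geometric_of_lt_one hr0 (r_lt_one s hp hs)).mul_right ((p:ℝ) ^ (-s.re))

lemma summable_inner (hs : 1 < s.re) (p : Nat.Primes) :
    Summable fun m : ℕ =>
      ‖χ ((((p : ℕ) ^ (m + 1) : ℕ)) : ZMod q) * (((p : ℕ) : ℂ)) ^ (-(((m : ℂ) + 1) * s))‖ := by
  have := summable_norm_f_pow q χ s hs p.2.two_le
  simpa only [f_pow_eq q χ s] using this

lemma FtildeInner_eq (p : Nat.Primes) :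
    FtildeInner q χ s p = ∑' a : ℕ, f q χ s ((p:ℕ) ^ (a+1)) := by
  rw [FtildeInner]
  exact tsum_congr fun m => f_pow_eq q χ s (p:ℕ) m

lemma norm_FtildeInner_le (hs : 1 < s.re) (p : Nat.Primes) :
    ‖FtildeInner q χ s p‖ ≤ (1 - ((p:ℕ):ℝ) ^ (-s.re))⁻¹ * ((p:ℕ):ℝ) ^ (-s.re) := by
  set r : ℝ := ((p:ℕ):ℝ) ^ (-s.re) with hr
  have hr0 : 0 ≤ r := Real.rpow_nonneg (Nat.cast_nonneg _) _
  have hr1 : r < 1 := r_lt_one s p.2.two_le hs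
  rw [FtildeInner_eq]
  calc ‖∑' a : ℕ, f q χ s ((p:ℕ) ^ (a+1))‖ ≤ ∑' a : ℕ, ‖f q χ s ((p:ℕ) ^ (a+1))‖ :=
        norm_tsum_le_tsum_norm (summable_norm_f_pow q χ s hs p.2.two_le)
    _ ≤ ∑' a : ℕ, r ^ (a+1) := by
        apply Summable.tsum_le_tsum (norm_f_pow_le q χ s (p:ℕ) p.2.one_lt.le)
          (summable_norm_f_pow q χ s hs p.2.two_le)
        · simpa [pow_succ] using (summable_geometric_of_lt_one hr0 hr1).mul_right r
    _ = (1 - r)⁻¹ * r := tsum_geom_succ hr0 hr1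

lemma rp_le_r2 (hs : 1 < s.re) (p : Nat.Primes) :
    ((p:ℕ):ℝ) ^ (-s.re) ≤ (2:ℝ) ^ (-s.re) :=
  Real.rpow_le_rpow_of_nonpos two_pos (by exact_mod_cast p.2.two_le) (by linarith)

lemma r2_lt_half (hs : 1 < s.re) : (2:ℝ) ^ (-s.re) < 1/2 := by
  have : (2:ℝ) ^ (-s.re) < (2:ℝ) ^ (-1:ℝ) :=
    (Real.rpow_lt_rpow_left_iff one_lt_two).mpr (by linarith)
  rwa [Real.rpow_neg_one, ← one_div] at this

lemma norm_g_le_C (hs : 1 < s.re) (p : Nat.Primes) :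
    ‖FtildeInner q χ s p‖ ≤ (1 - (2:ℝ) ^ (-s.re))⁻¹ * ((p:ℕ):ℝ) ^ (-s.re) := by
  have h2 := r2_lt_half s hs
  have h20 : 0 ≤ (2:ℝ) ^ (-s.re) := Real.rpow_nonneg (by norm_num) _
  have hple := rp_le_r2 s hs p
  have hp0 : 0 ≤ ((p:ℕ):ℝ) ^ (-s.re) := Real.rpow_nonneg (Nat.cast_nonneg _) _
  refine (norm_FtildeInner_le q χ s hs p).trans ?_
  apply mul_le_mul_of_nonneg_right _ hp0
  apply inv_anti₀ (by linarith) (by linarith)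

lemma norm_g_le_one (hs : 1 < s.re) (p : Nat.Primes) : ‖FtildeInner q χ s p‖ ≤ 1 := by
  have h2 := r2_lt_half s hs
  have h20 : 0 ≤ (2:ℝ) ^ (-s.re) := Real.rpow_nonneg (by norm_num) _
  have hple := rp_le_r2 s hs p
  have hp0 : 0 ≤ ((p:ℕ):ℝ) ^ (-s.re) := Real.rpow_nonneg (Nat.cast_nonneg _) _
  refine (norm_g_le_C q χ s hs p).trans ?_
  have hC : (1 - (2:ℝ) ^ (-s.re))⁻¹ ≤ 2 := by
    rw [inv_le_comm₀ (by linarith) (by norm_num)]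
    linarith
  calc (1 - (2:ℝ) ^ (-s.re))⁻¹ * ((p:ℕ):ℝ) ^ (-s.re) ≤ 2 * (1/2) := by
        apply mul_le_mul hC (by linarith) hp0 (by norm_num)
    _ = 1 := by norm_num

lemma summable_norm_g_pow (hs : 1 < s.re) (u : ℕ) (hu : 1 ≤ u) :
    Summable fun p : Nat.Primes => ‖(FtildeInner q χ s p) ^ u‖ := by
  have base : Summable fun p : Nat.Primes =>
      (1 - (2:ℝ) ^ (-s.re))⁻¹ * ((p:ℕ):ℝ) ^ (-s.re) :=
    (Nat.Primes.summable_rpow.mpr (by linarith)).mul_left _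
  apply Summable.of_nonneg_of_le (fun _ => norm_nonneg _) _ base
  intro p
  rw [norm_pow]
  calc ‖FtildeInner q χ s p‖ ^ u ≤ ‖FtildeInner q χ s p‖ ^ 1 :=
        pow_le_pow_of_le_one (norm_nonneg _) (norm_g_le_one q χ s hs p) hu
    _ = ‖FtildeInner q χ s p‖ := pow_one _
    _ ≤ _ := norm_g_le_C q χ s hs p

/-! ### The key reindexing identity -/

lemma Aterm_cond {p j n : ℕ}
    (h : 1 ≤ n ∧ ArithmeticFunction.cardDistinctFactors n = j ∧ ¬ p ∣ n) :
    Aterm q χ s p j n = f q χ s n := if_pos h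

lemma Aterm_ne_zero {p j n : ℕ} (h : Aterm q χ s p j n ≠ 0) :
    1 ≤ n ∧ ArithmeticFunction.cardDistinctFactors n = j ∧ ¬ p ∣ n := by
  by_contra hc
  exact h (if_neg hc)

lemma Bterm_ne_zero {p j n : ℕ} (h : Bterm q χ s p j n ≠ 0) :
    (1 ≤ n ∧ ArithmeticFunction.cardDistinctFactors n = j ∧ p ∣ n) ∧ f q χ s n ≠ 0 := by
  by_cases hc : 1 ≤ n ∧ ArithmeticFunction.cardDistinctFactors n = j ∧ p ∣ n
  · exact ⟨hc, by rwa [Bterm, if_pos hc] at h⟩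
  · exact absurd (if_neg hc) h

lemma B_eq (hs : 1 < s.re) (p : Nat.Primes) (j : ℕ) :
    ∑' n : ℕ, Bterm q χ s (p:ℕ) (j+1) n
      = (∑' a : ℕ, f q χ s ((p:ℕ) ^ (a+1))) * ∑' m : ℕ, Aterm q χ s (p:ℕ) j m := by
  have hp : (p:ℕ).Prime := p.2
  rw [tsum_mul_tsum_of_summable_norm (summable_norm_f_pow q χ s hs hp.two_le)
    (summable_Aterm q χ s hs (p:ℕ) j)]
  set G : ℕ × ℕ → ℂ := fun z => f q χ s ((p:ℕ) ^ (z.1+1)) * Aterm q χ s (p:ℕ) j z.2 with hG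
  have hcond : ∀ z : ℕ × ℕ, G z ≠ 0 →
      1 ≤ z.2 ∧ ArithmeticFunction.cardDistinctFactors z.2 = j ∧ ¬ (p:ℕ) ∣ z.2 := by
    intro z hz
    exact Aterm_ne_zero q χ s (right_ne_zero_of_mul hz)
  apply tsum_eq_tsum_of_ne_zero_bij
    (fun x : Function.support G => (p:ℕ) ^ ((x:ℕ×ℕ).1 + 1) * (x:ℕ×ℕ).2)
  · -- injectivity
    rintro ⟨⟨a, m⟩, hx⟩ ⟨⟨b, m'⟩, hy⟩ h
    simp only at h
    obtain ⟨-, -, hm⟩ := hcond _ hx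
    obtain ⟨hm'1, -, hm'⟩ := hcond _ hy
    obtain ⟨h1, h2⟩ := decomp_unique hp hm hm'
      (by have := hcond _ hx; omega) h
    exact Subtype.ext (Prod.ext_iff.mpr ⟨h1, h2⟩)
  · -- support ⊆ range
    rintro n hn
    have hB := Bterm_ne_zero q χ s hn
    obtain ⟨⟨hn1, hω, hdvd⟩, hfn⟩ := hB
    obtain ⟨a, m, hpm, hm0, hnm⟩ := decomp_exists hp (by omega) hdvd
    have hωm : ArithmeticFunction.cardDistinctFactors m = j := by
      have := omega_pow_mul hp a m hm0 hpm
      rw [← hnm] at this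
      omega
    have hAm : Aterm q χ s (p:ℕ) j m = f q χ s m :=
      Aterm_cond q χ s ⟨by omega, hωm, hpm⟩
    have hGz : G (a, m) ≠ 0 := by
      rw [hG]
      simp only [hAm]
      rw [← f_mul q χ s, ← hnm]
      exact hfn
    exact ⟨⟨(a, m), hGz⟩, hnm.symm⟩
  · -- values agree
    rintro ⟨⟨a, m⟩, hx⟩
    obtain ⟨hm1, hωm, hpm⟩ := hcond _ hx
    replace hm1 : 1 ≤ m := hm1
    replace hωm : ArithmeticFunction.cardDistinctFactors m = j := hωm
    replace hpm : ¬ (p:ℕ) ∣ m := hpm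
    show Bterm q χ s (p:ℕ) (j+1) ((p:ℕ) ^ (a+1) * m)
      = f q χ s ((p:ℕ) ^ (a+1)) * Aterm q χ s (p:ℕ) j m
    have hm0 : m ≠ 0 := by omega
    have hcondB : 1 ≤ (p:ℕ) ^ (a+1) * m ∧
        ArithmeticFunction.cardDistinctFactors ((p:ℕ) ^ (a+1) * m) = j + 1 ∧
        (p:ℕ) ∣ (p:ℕ) ^ (a+1) * m := by
      refine ⟨?_, ?_, Dvd.dvd.mul_right (dvd_pow_self _ (Nat.succ_ne_zero a)) m⟩
      · exact Nat.one_le_iff_ne_zero.mpr (mul_ne_zero (pow_ne_zero _ hp.pos.ne') hm0)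
      · have := omega_pow_mul hp a m hm0 hpm
        omega
    rw [Bterm, if_pos hcondB, f_mul q χ s, Aterm_cond q χ s ⟨hm1, hωm, hpm⟩]

/-! ### Counting: `∑_p B_p = k F_k` -/

/-- The finset of primes dividing `n`, as a `Finset Nat.Primes`. -/
def primesOf (n : ℕ) : Finset Nat.Primes :=
  n.primeFactors.attach.map
    ⟨(fun x => ⟨x.1, Nat.prime_of_mem_primeFactors x.2⟩ :
        {x // x ∈ n.primeFactors} → Nat.Primes),
      fun a b hab => Subtype.ext (congrArg (fun t : Nat.Primes => (t : ℕ)) hab)⟩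

lemma mem_primesOf {p : Nat.Primes} {n : ℕ} : p ∈ primesOf n ↔ (p:ℕ) ∈ n.primeFactors := by
  simp only [primesOf, Finset.mem_map, Finset.mem_attach, true_and, Subtype.exists,
    Function.Embedding.coeFn_mk]
  constructor
  · rintro ⟨a, ha, rfl⟩; exact ha
  · intro hp; exact ⟨(p:ℕ), hp, Subtype.ext rfl⟩

lemma card_primesOf (n : ℕ) : (primesOf n).card = n.primeFactors.card := by
  rw [primesOf, Finset.card_map, Finset.card_attach]

lemma tsum_B_inner (k n : ℕ) :
    ∑' p : Nat.Primes, Bterm q χ s (p:ℕ) k n = (k:ℂ) * FomegaTerm q χ s k n := by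
  by_cases h : 1 ≤ n ∧ ArithmeticFunction.cardDistinctFactors n = k
  · have hvanish : ∀ p : Nat.Primes, p ∉ primesOf n → Bterm q χ s (p:ℕ) k n = 0 := by
      intro p hp
      rw [Bterm, if_neg]
      rintro ⟨h1, -, hd⟩
      exact hp (mem_primesOf.mpr (Nat.mem_primeFactors.mpr ⟨p.2, hd, by omega⟩))
    rw [tsum_eq_sum hvanish,
      Finset.sum_congr rfl (fun p hp => by
        rw [Bterm, if_pos ⟨h.1, h.2, Nat.dvd_of_mem_primeFactors (mem_primesOf.mp hp)⟩]),
      Finset.sum_const, card_primesOf, nsmul_eq_mul, FomegaTerm, if_pos h]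
    congr 1
    rw [← h.2]
    rfl
  · have : ∀ p : Nat.Primes, Bterm q χ s (p:ℕ) k n = 0 := by
      intro p
      rw [Bterm, if_neg (by tauto)]
    rw [tsum_congr this, tsum_zero, FomegaTerm, if_neg h, mul_zero]

lemma tsum_B_inner_norm (k n : ℕ) :
    ∑' p : Nat.Primes, ‖Bterm q χ s (p:ℕ) k n‖ = (k:ℝ) * ‖FomegaTerm q χ s k n‖ := by
  by_cases h : 1 ≤ n ∧ ArithmeticFunction.cardDistinctFactors n = k
  · have hvanish : ∀ p : Nat.Primes, p ∉ primesOf n → ‖Bterm q χ s (p:ℕ) k n‖ = 0 := by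
      intro p hp
      rw [Bterm, if_neg, norm_zero]
      rintro ⟨h1, -, hd⟩
      exact hp (mem_primesOf.mpr (Nat.mem_primeFactors.mpr ⟨p.2, hd, by omega⟩))
    rw [tsum_eq_sum hvanish,
      Finset.sum_congr rfl (fun p hp => by
        rw [Bterm, if_pos ⟨h.1, h.2, Nat.dvd_of_mem_primeFactors (mem_primesOf.mp hp)⟩]),
      Finset.sum_const, card_primesOf, nsmul_eq_mul, FomegaTerm, if_pos h]
    congr 1
    rw [← h.2]
    rfl
  · have : ∀ p : Nat.Primes, ‖Bterm q χ s (p:ℕ) k n‖ = 0 := by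
      intro p
      rw [Bterm, if_neg (by tauto), norm_zero]
    rw [tsum_congr this, tsum_zero, FomegaTerm, if_neg h, norm_zero, mul_zero]

lemma summable_B_pair (hs : 1 < s.re) (k : ℕ) :
    Summable fun x : Nat.Primes × ℕ => Bterm q χ s (x.1:ℕ) k x.2 := by
  apply Summable.of_norm
  have key : Summable fun x : ℕ × Nat.Primes => ‖Bterm q χ s (x.2:ℕ) k x.1‖ := by
    apply (summable_prod_of_nonneg (fun x => norm_nonneg _)).mpr
    constructor
    · intro n
      apply summable_of_ne_finset_zero (s := primesOf n)
      intro p hp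
      rw [Bterm, if_neg, norm_zero]
      rintro ⟨h1, -, hd⟩
      exact hp (mem_primesOf.mpr (Nat.mem_primeFactors.mpr ⟨p.2, hd, by omega⟩))
    · apply Summable.congr ((summable_Fterm q χ s hs k).mul_left (k:ℝ))
      intro n
      exact (tsum_B_inner_norm q χ s k n).symm
  have := (Equiv.prodComm Nat.Primes ℕ).summable_iff.mpr key
  exact this

lemma counting (hs : 1 < s.re) (k : ℕ) :
    ∑' p : Nat.Primes, ∑' n : ℕ, Bterm q χ s (p:ℕ) k n
      = (k:ℂ) * ∑' n : ℕ, FomegaTerm q χ s k n := by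
  rw [← tsum_mul_left]
  rw [← Summable.tsum_comm (f := fun (p : Nat.Primes) (n : ℕ) => Bterm q χ s (p:ℕ) k n)
    (summable_B_pair q χ s hs k)]
  exact tsum_congr fun n => tsum_B_inner q χ s k n

/-! ### The recursion for the restricted sums -/

lemma omega_zero_iff (n : ℕ) :
    (1 ≤ n ∧ ArithmeticFunction.cardDistinctFactors n = 0) ↔ n = 1 := by
  constructor
  · rintro ⟨h1, h0⟩
    rw [omega_eq] at h0
    rcases Nat.primeFactors_eq_empty.mp (Finset.card_eq_zero.mp h0) with h | h
    · omega
    · exact h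
  · rintro rfl
    exact ⟨le_refl 1, by rw [omega_eq, Nat.primeFactors_one, Finset.card_empty]⟩

lemma F_zero : ∑' n : ℕ, FomegaTerm q χ s 0 n = 1 := by
  have : ∀ n : ℕ, FomegaTerm q χ s 0 n = if n = 1 then 1 else 0 := by
    intro n
    rw [FomegaTerm]
    by_cases h : n = 1
    · rw [if_pos ((omega_zero_iff n).mpr h), if_pos h, h]
      exact f_one q χ s
    · rw [if_neg (fun hc => h ((omega_zero_iff n).mp hc)), if_neg h]
  rw [tsum_congr this, tsum_ite_eq]

lemma A_zero (p : ℕ) (hp : p.Prime) : ∑' n : ℕ, Aterm q χ s p 0 n = 1 := by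
  have : ∀ n : ℕ, Aterm q χ s p 0 n = if n = 1 then 1 else 0 := by
    intro n
    rw [Aterm]
    by_cases h : n = 1
    · subst h
      rw [if_pos ⟨le_refl 1, ((omega_zero_iff 1).mpr rfl).2,
        fun hd => hp.ne_one (Nat.dvd_one.mp hd)⟩, if_pos rfl]
      exact f_one q χ s
    · rw [if_neg (fun hc => h ((omega_zero_iff n).mp ⟨hc.1, hc.2.1⟩)), if_neg h]
  rw [tsum_congr this, tsum_ite_eq]

lemma A_formula (hs : 1 < s.re) (p : Nat.Primes) (j : ℕ) :
    ∑' n : ℕ, Aterm q χ s (p:ℕ) j n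
      = ∑ i ∈ Finset.range (j+1),
          (-(FtildeInner q χ s p)) ^ i * ∑' n : ℕ, FomegaTerm q χ s (j - i) n := by
  induction j with
  | zero =>
      rw [A_zero q χ s (p:ℕ) p.2]
      simp [F_zero q χ s]
  | succ j ih =>
      have hsplit : ∑' n : ℕ, FomegaTerm q χ s (j+1) n
          = (∑' n : ℕ, Aterm q χ s (p:ℕ) (j+1) n) + ∑' n : ℕ, Bterm q χ s (p:ℕ) (j+1) n := by
        rw [← Summable.tsum_add ((summable_Aterm q χ s hs (p:ℕ) (j+1)).of_norm)
          ((summable_Bterm q χ s hs (p:ℕ) (j+1)).of_norm)]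
        exact tsum_congr fun n => Fterm_split q χ s (p:ℕ) (j+1) n
      have hBA : ∑' n : ℕ, Bterm q χ s (p:ℕ) (j+1) n
          = FtildeInner q χ s p * ∑' n : ℕ, Aterm q χ s (p:ℕ) j n := by
        rw [B_eq q χ s hs p j, FtildeInner_eq q χ s p]
      have hA : ∑' n : ℕ, Aterm q χ s (p:ℕ) (j+1) n
          = ∑' n : ℕ, FomegaTerm q χ s (j+1) n
            - FtildeInner q χ s p * ∑' n : ℕ, Aterm q χ s (p:ℕ) j n := by
        rw [← hBA, hsplit]; ring
      have hsub : ∀ i : ℕ, j + 1 - (i + 1) = j - i := fun i => by omega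
      rw [hA, ih, Finset.sum_range_succ'
        (fun i => (-(FtildeInner q χ s p)) ^ i * ∑' n : ℕ, FomegaTerm q χ s (j + 1 - i) n)
        (j+1)]
      simp only [hsub, pow_zero, one_mul, Nat.sub_zero]
      rw [sub_eq_add_neg, add_comm]
      congr 1
      rw [Finset.mul_sum, ← Finset.sum_neg_distrib]
      exact Finset.sum_congr rfl fun i _ => by ring

lemma part4 (hs : 1 < s.re) (k : ℕ) (hk : 1 ≤ k) :
    (k : ℂ) * ∑' n : ℕ, FomegaTerm q χ s k n =
      ∑ n ∈ Finset.Icc 1 k,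
        (-1 : ℂ) ^ (n - 1) * (∑' m : ℕ, FomegaTerm q χ s (k - n) m) * Ftilde q χ s n := by
  obtain ⟨K, rfl⟩ : ∃ K, k = K + 1 := ⟨k - 1, by omega⟩
  rw [← counting q χ s hs (K+1)]
  have step1 : ∀ p : Nat.Primes, ∑' n : ℕ, Bterm q χ s (p:ℕ) (K+1) n
      = ∑ i ∈ Finset.range (K+1),
          (-1:ℂ)^i * (∑' m : ℕ, FomegaTerm q χ s (K - i) m)
            * (FtildeInner q χ s p) ^ (i+1) := by
    intro p
    rw [B_eq q χ s hs p K, ← FtildeInner_eq q χ s p, A_formula q χ s hs p K, Finset.mul_sum]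
    exact Finset.sum_congr rfl fun i _ => by rw [neg_pow]; ring
  rw [tsum_congr step1, Summable.tsum_finsetSum
    (fun i _ => (((summable_norm_g_pow q χ s hs (i+1) (by omega)).of_norm).mul_left _))]
  rw [show Finset.Icc 1 (K+1) = Finset.map ⟨fun i => i + 1, add_left_injective 1⟩
      (Finset.range (K+1)) from by
        ext x
        simp only [Finset.mem_Icc, Finset.mem_map, Finset.mem_range,
          Function.Embedding.coeFn_mk]
        constructor
        · rintro ⟨h1, h2⟩; exact ⟨x - 1, by omega, by omega⟩
        · rintro ⟨a, ha, rfl⟩; omega,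
      Finset.sum_map]
  apply Finset.sum_congr rfl
  intro i _
  simp only [Function.Embedding.coeFn_mk, Nat.add_sub_cancel, Nat.succ_sub_succ, Nat.sub_zero]
  rw [tsum_mul_left, Ftilde]

end Main
end FomegaProofAux

/-- **Recursion for `F_{ω_k}`** (Meng, eq. (2.11)): for `Re(s) > 1` all the series converge
absolutely and `k F_{ω_k}(s, χ) = ∑_{n=1}^{k} (-1)^{n-1} F_{ω_{k-n}}(s, χ) F̃(s, χ; n)`. -/
theorem Fomega_recursion (q : ℕ) (χ : DirichletCharacter ℂ q) (s : ℂ) (hs : 1 < s.re) :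
    (∀ j : ℕ, Summable (fun n : ℕ => ‖FomegaTerm q χ s j n‖)) ∧
    (∀ p : Nat.Primes,
      Summable (fun m : ℕ =>
        ‖χ ((((p : ℕ) ^ (m + 1) : ℕ)) : ZMod q) * (((p : ℕ) : ℂ)) ^ (-(((m : ℂ) + 1) * s))‖)) ∧
    (∀ u : ℕ, 1 ≤ u → Summable (fun p : Nat.Primes => ‖(FtildeInner q χ s p) ^ u‖)) ∧
    (∀ k : ℕ, 1 ≤ k →
      (k : ℂ) * ∑' n : ℕ, FomegaTerm q χ s k n =
        ∑ n ∈ Finset.Icc 1 k,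
          (-1 : ℂ) ^ (n - 1) * (∑' m : ℕ, FomegaTerm q χ s (k - n) m) * Ftilde q χ s n) :=
  ⟨FomegaProofAux.summable_Fterm q χ s hs,
   FomegaProofAux.summable_inner q χ s hs,
   fun u hu => FomegaProofAux.summable_norm_g_pow q χ s hs u hu,
   fun k hk => FomegaProofAux.part4 q χ s hs k hk⟩
end

section
/- Let χ be a non-principal Dirichlet character mod q and define logL(s, χ) = Σ_{p prime} Σ_{m ≥ 1} χ(p^m)/(m p^{ms}). Then: (i) the double series G̃₁(s) = Σ_{p prime} Σ_{m ≥ 3} c_m χ(p^m) p^{−ms}, where c_m = 1 − 1/m for odd m and c_m = 1 − 2/m for even m, converges absolutely for Re(s) > 1/3, and for every s with Re(s) > 1 one has Σ_{p prime} Σ_{j ≥ 1} χ(p^j) p^{−js} = logL(s, χ) + (1/2) · logL(2s, χ²) + G̃₁(s); (ii) the double series G̃₂(s) = Σ_{p prime} Σ_{m ≥ 3} d_m χ(p^m) p^{−ms}, where d_m = m − 1 for odd m and d_m = m − 1 − 2/m for even m, converges absolutely for Re(s) > 1/3, and for every s with Re(s) > 1 one has Σ_{p prime} Σ_{j ≥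 2} (j − 1) χ(p^j) p^{−js} = logL(2s, χ²) + G̃₂(s). -/
open Complex

/-- The `(p, m)`-term `χ(p^m)/(m p^{ms})` (indexed by `m = pm.2 + 1 ≥ 1`) of the
double series defining `log L(s, χ)`. -/
noncomputable def logLTerm (q : ℕ) (χ : DirichletCharacter ℂ q) (s : ℂ)
    (pm : Nat.Primes × ℕ) : ℂ :=
  χ ((((pm.1 : ℕ) ^ (pm.2 + 1) : ℕ)) : ZMod q) /
    (((pm.2 : ℂ) + 1) * (((pm.1 : ℕ) : ℂ)) ^ (((pm.2 : ℂ) + 1) * s))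

/-- `log L(s, χ) = ∑_p ∑_{m ≥ 1} χ(p^m)/(m p^{ms})`. -/
noncomputable def logL (q : ℕ) (χ : DirichletCharacter ℂ q) (s : ℂ) : ℂ :=
  ∑' pm : Nat.Primes × ℕ, logLTerm q χ s pm

/-- `c_m = 1 - 1/m` for odd `m`, `c_m = 1 - 2/m` for even `m`. -/
noncomputable def cCoeff (m : ℕ) : ℂ := if Odd m then 1 - 1 / (m : ℂ) else 1 - 2 / (m : ℂ)

/-- `d_m = m - 1` for odd `m`, `d_m = m - 1 - 2/m` for even `m`. -/
noncomputable def dCoeff (m : ℕ) : ℂ :=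
  if Odd m then (m : ℂ) - 1 else (m : ℂ) - 1 - 2 / (m : ℂ)

/-- The `(p, m)`-term (with `m = pm.2 + 1`) of `G̃₁(s) = ∑_p ∑_{m ≥ 3} c_m χ(p^m) p^{-ms}`. -/
noncomputable def G1Term (q : ℕ) (χ : DirichletCharacter ℂ q) (s : ℂ)
    (pm : Nat.Primes × ℕ) : ℂ :=
  if 3 ≤ pm.2 + 1 then
    cCoeff (pm.2 + 1) * χ ((((pm.1 : ℕ) ^ (pm.2 + 1) : ℕ)) : ZMod q) *
      (((pm.1 : ℕ) : ℂ)) ^ (-((((pm.2 : ℂ) + 1)) * s))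
  else 0

/-- The `(p, m)`-term (with `m = pm.2 + 1`) of `G̃₂(s) = ∑_p ∑_{m ≥ 3} d_m χ(p^m) p^{-ms}`. -/
noncomputable def G2Term (q : ℕ) (χ : DirichletCharacter ℂ q) (s : ℂ)
    (pm : Nat.Primes × ℕ) : ℂ :=
  if 3 ≤ pm.2 + 1 then
    dCoeff (pm.2 + 1) * χ ((((pm.1 : ℕ) ^ (pm.2 + 1) : ℕ)) : ZMod q) *
      (((pm.1 : ℕ) : ℂ)) ^ (-((((pm.2 : ℂ) + 1)) * s))
  else 0


section Aux

lemma geom_aux (k : ℕ) {r : ℝ} (hr0 : 0 ≤ r) (hr : r < 1) :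
    Summable (fun n : ℕ => ((n : ℝ) + 1) ^ k * r ^ n) := by
  have h1 : Summable (fun n : ℕ => (n : ℝ) ^ k * r ^ n) :=
    summable_pow_mul_geometric_of_norm_lt_one k
      (by rwa [Real.norm_eq_abs, _root_.abs_of_nonneg hr0])
  have h2 : Summable (fun n : ℕ => r ^ n) := summable_geometric_of_lt_one hr0 hr
  refine Summable.of_nonneg_of_le (fun n => by positivity) (fun n => ?_)
    (((h1.add h2).mul_left ((2:ℝ) ^ k)))
  have hb : ((n : ℝ) + 1) ^ k ≤ 2 ^ k * ((n:ℝ) ^ k + 1) := by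
    rcases Nat.eq_zero_or_pos n with hn | hn
    · subst hn
      have h2k : (1:ℝ) ≤ 2^k := one_le_pow₀ (by norm_num)
      have h0k : (0:ℝ) ≤ ((0:ℕ):ℝ)^k := by positivity
      simp only [Nat.cast_zero, zero_add, one_pow] at h0k ⊢
      nlinarith
    · have h1n : (1:ℝ) ≤ n := by exact_mod_cast hn
      calc ((n:ℝ)+1)^k ≤ (2*n)^k := by
            apply pow_le_pow_left₀ (by positivity) (by linarith)
        _ = 2^k * (n:ℝ)^k := by rw [mul_pow]
        _ ≤ 2^k * ((n:ℝ)^k + 1) := by nlinarith [pow_pos (show (0:ℝ) < 2 by norm_num) k]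
  calc ((n:ℝ)+1)^k * r^n ≤ (2^k * ((n:ℝ)^k+1)) * r^n :=
        mul_le_mul_of_nonneg_right hb (by positivity)
    _ = 2^k * ((n:ℝ)^k * r^n + r^n) := by ring

lemma key_summable {σ : ℝ} (hσ : 0 < σ) (k a : ℕ) (ha : 1 < ((a:ℝ) + 1) * σ) :
    Summable (fun pm : Nat.Primes × ℕ =>
      if a ≤ pm.2 then ((pm.2 : ℝ) + 1) ^ k * ((pm.1 : ℕ) : ℝ) ^ (-(((pm.2 : ℝ) + 1) * σ))
      else 0) := by
  set r : ℝ := (2:ℝ) ^ (-σ) with hrdef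
  have hr0 : 0 < r := Real.rpow_pos_of_pos (by norm_num) _
  have hr1 : r < 1 := Real.rpow_lt_one_of_one_lt_of_neg (by norm_num) (by linarith)
  have hg : Summable (fun p : Nat.Primes => ((p:ℕ):ℝ) ^ (-(((a:ℝ)+1) * σ))) :=
    Nat.Primes.summable_rpow.mpr (by linarith)
  have hh : Summable (fun m : ℕ => (2:ℝ) ^ ((a:ℝ)*σ) * (((m:ℝ)+1)^k * r ^ m)) :=
    (geom_aux k hr0.le hr1).mul_left _
  refine Summable.of_nonneg_of_le (fun pm => ?_) ?_
    (hg.mul_of_nonneg hh (fun p => (Real.rpow_pos_of_pos (by exact_mod_cast p.prop.pos) _).le)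
      (fun m => by positivity))
  · split
    · positivity
    · exact le_rfl
  · rintro ⟨p, m⟩
    dsimp only
    by_cases hm : a ≤ m
    · rw [if_pos hm]
      have hp2 : (2:ℝ) ≤ ((p:ℕ):ℝ) := by exact_mod_cast p.prop.two_le
      have hp0 : (0:ℝ) < ((p:ℕ):ℝ) := by linarith
      have hma : (0:ℝ) ≤ ((m:ℝ) - a) := by
        have : (a:ℝ) ≤ m := by exact_mod_cast hm
        linarith
      have e1 : ((p:ℕ):ℝ) ^ (-(((m:ℝ)+1)*σ)) =
          ((p:ℕ):ℝ) ^ (-(((a:ℝ)+1)*σ)) * ((p:ℕ):ℝ) ^ (-(((m:ℝ)-(a:ℝ))*σ)) := by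
        rw [← Real.rpow_add hp0]; ring_nf
      have e2 : ((p:ℕ):ℝ) ^ (-(((m:ℝ)-(a:ℝ))*σ)) ≤ (2:ℝ) ^ (-(((m:ℝ)-(a:ℝ))*σ)) :=
        Real.rpow_le_rpow_of_nonpos (by norm_num) hp2 (by nlinarith)
      have e3 : (2:ℝ) ^ (-(((m:ℝ)-(a:ℝ))*σ)) = (2:ℝ)^((a:ℝ)*σ) * r ^ m := by
        rw [hrdef, ← Real.rpow_natCast ((2:ℝ) ^ (-σ)) m, ← Real.rpow_mul (by norm_num),
          ← Real.rpow_add (by norm_num)]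
        ring_nf
      calc ((m:ℝ)+1)^k * ((p:ℕ):ℝ) ^ (-(((m:ℝ)+1)*σ))
          ≤ ((m:ℝ)+1)^k * (((p:ℕ):ℝ) ^ (-(((a:ℝ)+1)*σ)) * ((2:ℝ)^((a:ℝ)*σ) * r ^ m)) := by
            rw [e1]
            apply mul_le_mul_of_nonneg_left _ (by positivity)
            rw [← e3]
            exact mul_le_mul_of_nonneg_left e2 (Real.rpow_pos_of_pos hp0 _).le
        _ = ((p:ℕ):ℝ) ^ (-(((a:ℝ)+1)*σ)) * ((2:ℝ)^((a:ℝ)*σ) * (((m:ℝ)+1)^k * r ^ m)) := by ring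
    · rw [if_neg hm]
      have : (0:ℝ) ≤ ((p:ℕ):ℝ) ^ (-(((a:ℝ)+1)*σ)) := Real.rpow_nonneg (by positivity) _
      positivity

lemma norm_p_cpow (p : Nat.Primes) (w : ℂ) : ‖((p:ℕ):ℂ) ^ w‖ = ((p:ℕ):ℝ) ^ w.re :=
  Complex.norm_natCast_cpow_of_pos p.prop.pos w

lemma re_neg_M (m : ℕ) (s : ℂ) : (-(((m:ℂ)+1)*s)).re = -(((m:ℝ)+1)*s.re) := by
  simp [Complex.mul_re]

lemma re_M (m : ℕ) (s : ℂ) : ((((m:ℂ)+1))*s).re = ((m:ℝ)+1)*s.re := by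
  simp [Complex.mul_re]

lemma norm_term (p : Nat.Primes) (m : ℕ) (s : ℂ) :
    ‖((p:ℕ):ℂ) ^ (-(((m:ℂ)+1) * s))‖ = ((p:ℕ):ℝ) ^ (-(((m:ℝ)+1) * s.re)) := by
  rw [norm_p_cpow, re_neg_M]

lemma summable_of_bound {f : Nat.Primes × ℕ → ℂ} {σ : ℝ} (hσ : 0 < σ) (k a : ℕ)
    (ha : 1 < ((a:ℝ)+1)*σ)
    (hb : ∀ pm : Nat.Primes × ℕ, ‖f pm‖ ≤
      (if a ≤ pm.2 then ((pm.2:ℝ)+1)^k * ((pm.1:ℕ):ℝ)^(-(((pm.2:ℝ)+1)*σ)) else 0)) :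
    Summable (fun pm => ‖f pm‖) :=
  Summable.of_nonneg_of_le (fun _ => norm_nonneg _) hb (key_summable hσ k a ha)

lemma chi_norm_le {q : ℕ} [NeZero q] (χ : DirichletCharacter ℂ q) (a : ZMod q) : ‖χ a‖ ≤ 1 :=
  χ.norm_le_one a

lemma summable_f1 {q : ℕ} [NeZero q] (χ : DirichletCharacter ℂ q) {s : ℂ} (hs : 1 < s.re) :
    Summable (fun pm : Nat.Primes × ℕ =>
      ‖χ ((((pm.1 : ℕ) ^ (pm.2 + 1) : ℕ)) : ZMod q) *
        (((pm.1 : ℕ) : ℂ)) ^ (-((((pm.2 : ℂ) + 1)) * s))‖) := by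
  refine summable_of_bound (by linarith) 0 0 (by push_cast; linarith) (fun pm => ?_)
  rw [if_pos (Nat.zero_le _), pow_zero, one_mul, norm_mul, norm_term]
  exact mul_le_of_le_one_left (Real.rpow_nonneg (by positivity) _) (chi_norm_le χ _)

lemma summable_f2 {q : ℕ} [NeZero q] (χ : DirichletCharacter ℂ q) {s : ℂ} (hs : 1 < s.re) :
    Summable (fun pm : Nat.Primes × ℕ =>
      ‖(pm.2 : ℂ) * χ ((((pm.1 : ℕ) ^ (pm.2 + 1) : ℕ)) : ZMod q) *
        (((pm.1 : ℕ) : ℂ)) ^ (-((((pm.2 : ℂ) + 1)) * s))‖) := by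
  refine summable_of_bound (by linarith) 1 0 (by push_cast; linarith) (fun pm => ?_)
  rw [if_pos (Nat.zero_le _), pow_one, norm_mul, norm_mul, norm_term]
  have h1 : ‖(pm.2 : ℂ)‖ ≤ (pm.2 : ℝ) + 1 := by
    rw [Complex.norm_natCast]; linarith
  have h2 : ‖χ ((((pm.1 : ℕ) ^ (pm.2 + 1) : ℕ)) : ZMod q)‖ ≤ 1 := chi_norm_le χ _
  have hpos : (0:ℝ) ≤ ((pm.1:ℕ):ℝ) ^ (-(((pm.2:ℝ)+1)*s.re)) := Real.rpow_nonneg (by positivity) _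
  calc ‖(pm.2:ℂ)‖ * ‖χ _‖ * (((pm.1:ℕ):ℝ) ^ (-(((pm.2:ℝ)+1)*s.re)))
      ≤ (((pm.2:ℝ)+1) * 1) * (((pm.1:ℕ):ℝ) ^ (-(((pm.2:ℝ)+1)*s.re))) := by
        apply mul_le_mul_of_nonneg_right _ hpos
        exact mul_le_mul h1 h2 (norm_nonneg _) (by positivity)
    _ = ((pm.2:ℝ)+1) * (((pm.1:ℕ):ℝ) ^ (-(((pm.2:ℝ)+1)*s.re))) := by ring

lemma summable_logLTerm {q : ℕ} [NeZero q] (χ : DirichletCharacter ℂ q) {s : ℂ} (hs : 1 < s.re) :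
    Summable (fun pm : Nat.Primes × ℕ => ‖logLTerm q χ s pm‖) := by
  refine summable_of_bound (by linarith) 0 0 (by push_cast; linarith) (fun pm => ?_)
  rw [if_pos (Nat.zero_le _), pow_zero, one_mul]
  unfold logLTerm
  rw [norm_div, norm_mul, norm_p_cpow, re_M]
  have hM : ‖((pm.2:ℂ)+1)‖ = (pm.2:ℝ)+1 := by
    have : ((pm.2:ℂ)+1) = (((pm.2+1 : ℕ)):ℂ) := by push_cast; ring
    rw [this, Complex.norm_natCast]; push_cast; ring
  rw [hM, Real.rpow_neg (by positivity)]
  have hp1 : (1:ℝ) ≤ ((pm.1:ℕ):ℝ) ^ (((pm.2:ℝ)+1)*s.re) := by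
    apply Real.one_le_rpow (by exact_mod_cast pm.1.prop.one_lt.le) (by positivity)
  have hd : ((pm.1:ℕ):ℝ) ^ (((pm.2:ℝ)+1)*s.re)
      ≤ ((pm.2:ℝ)+1) * ((pm.1:ℕ):ℝ) ^ (((pm.2:ℝ)+1)*s.re) := by
    nlinarith [Nat.cast_nonneg (α := ℝ) pm.2]
  have hdpos : (0:ℝ) < ((pm.1:ℕ):ℝ) ^ (((pm.2:ℝ)+1)*s.re) := by
    apply Real.rpow_pos_of_pos; exact_mod_cast pm.1.prop.pos
  calc ‖χ _‖ / (((pm.2:ℝ)+1) * ((pm.1:ℕ):ℝ) ^ (((pm.2:ℝ)+1)*s.re))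
      ≤ 1 / (((pm.1:ℕ):ℝ) ^ (((pm.2:ℝ)+1)*s.re)) := by
        apply div_le_div₀ (by norm_num) (chi_norm_le χ _) hdpos hd
    _ = (((pm.1:ℕ):ℝ) ^ (((pm.2:ℝ)+1)*s.re))⁻¹ := one_div _

lemma norm_cCoeff_le {m : ℕ} (hm : 2 ≤ m) : ‖cCoeff m‖ ≤ 2 := by
  have hm' : (2:ℝ) ≤ (m:ℝ) := by exact_mod_cast hm
  have h1 : ‖(1 : ℂ)/(m:ℂ)‖ ≤ 1 := by
    rw [norm_div, norm_one, Complex.norm_natCast]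
    rw [div_le_one (by linarith)]; linarith
  have h2 : ‖(2 : ℂ)/(m:ℂ)‖ ≤ 1 := by
    rw [norm_div, Complex.norm_natCast]
    rw [Complex.norm_ofNat, div_le_one (by linarith)]; linarith
  unfold cCoeff
  split
  · calc ‖1 - 1/(m:ℂ)‖ ≤ ‖(1:ℂ)‖ + ‖(1:ℂ)/(m:ℂ)‖ := norm_sub_le _ _
      _ ≤ 1 + 1 := by rw [norm_one]; linarith
      _ = 2 := by norm_num
  · calc ‖1 - 2/(m:ℂ)‖ ≤ ‖(1:ℂ)‖ + ‖(2:ℂ)/(m:ℂ)‖ := norm_sub_le _ _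
      _ ≤ 1 + 1 := by rw [norm_one]; linarith
      _ = 2 := by norm_num

lemma norm_dCoeff_le {m : ℕ} (hm : 2 ≤ m) : ‖dCoeff m‖ ≤ (m:ℝ) + 2 := by
  have hm' : (2:ℝ) ≤ (m:ℝ) := by exact_mod_cast hm
  have h1 : ‖(m:ℂ) - 1‖ ≤ (m:ℝ) + 1 := by
    calc ‖(m:ℂ) - 1‖ ≤ ‖(m:ℂ)‖ + ‖(1:ℂ)‖ := norm_sub_le _ _
      _ = (m:ℝ) + 1 := by rw [Complex.norm_natCast, norm_one]
  have h2 : ‖(2 : ℂ)/(m:ℂ)‖ ≤ 1 := by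
    rw [norm_div, Complex.norm_natCast, Complex.norm_ofNat, div_le_one (by linarith)]; linarith
  unfold dCoeff
  split
  · linarith
  · calc ‖(m:ℂ) - 1 - 2/(m:ℂ)‖ ≤ ‖(m:ℂ) - 1‖ + ‖(2:ℂ)/(m:ℂ)‖ := norm_sub_le _ _
      _ ≤ (m:ℝ) + 2 := by linarith

lemma summable_G1 {q : ℕ} [NeZero q] (χ : DirichletCharacter ℂ q) {s : ℂ} (hs : 1/3 < s.re) :
    Summable (fun pm : Nat.Primes × ℕ => ‖G1Term q χ s pm‖) := by
  refine summable_of_bound (by linarith) 1 2 (by push_cast; linarith) (fun pm => ?_)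
  unfold G1Term
  by_cases h3 : 3 ≤ pm.2 + 1
  · rw [if_pos h3, if_pos (by omega : 2 ≤ pm.2), pow_one, norm_mul, norm_mul, norm_term]
    have hc : ‖cCoeff (pm.2+1)‖ ≤ 2 := norm_cCoeff_le (by omega)
    have hm2 : (2:ℝ) ≤ (pm.2:ℝ) := by exact_mod_cast (by omega : 2 ≤ pm.2)
    have hpos : (0:ℝ) ≤ ((pm.1:ℕ):ℝ) ^ (-(((pm.2:ℝ)+1)*s.re)) :=
      Real.rpow_nonneg (by positivity) _
    calc ‖cCoeff (pm.2+1)‖ * ‖χ _‖ * (((pm.1:ℕ):ℝ) ^ (-(((pm.2:ℝ)+1)*s.re)))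
        ≤ (2 * 1) * (((pm.1:ℕ):ℝ) ^ (-(((pm.2:ℝ)+1)*s.re))) := by
          apply mul_le_mul_of_nonneg_right _ hpos
          exact mul_le_mul hc (chi_norm_le χ _) (norm_nonneg _) (by norm_num)
      _ ≤ ((pm.2:ℝ)+1) * (((pm.1:ℕ):ℝ) ^ (-(((pm.2:ℝ)+1)*s.re))) := by
          apply mul_le_mul_of_nonneg_right (by linarith) hpos
  · rw [if_neg h3, if_neg (by omega : ¬ 2 ≤ pm.2), norm_zero]

lemma summable_G2 {q : ℕ} [NeZero q] (χ : DirichletCharacter ℂ q) {s : ℂ} (hs : 1/3 < s.re) :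
    Summable (fun pm : Nat.Primes × ℕ => ‖G2Term q χ s pm‖) := by
  refine summable_of_bound (by linarith) 2 2 (by push_cast; linarith) (fun pm => ?_)
  unfold G2Term
  by_cases h3 : 3 ≤ pm.2 + 1
  · rw [if_pos h3, if_pos (by omega : 2 ≤ pm.2), norm_mul, norm_mul, norm_term]
    have hc : ‖dCoeff (pm.2+1)‖ ≤ ((pm.2+1:ℕ):ℝ) + 2 := norm_dCoeff_le (by omega)
    have hm2 : (2:ℝ) ≤ (pm.2:ℝ) := by exact_mod_cast (by omega : 2 ≤ pm.2)
    have hpos : (0:ℝ) ≤ ((pm.1:ℕ):ℝ) ^ (-(((pm.2:ℝ)+1)*s.re)) :=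
      Real.rpow_nonneg (by positivity) _
    have hc2 : ‖dCoeff (pm.2+1)‖ ≤ ((pm.2:ℝ)+1)^2 := by
      push_cast at hc
      nlinarith
    calc ‖dCoeff (pm.2+1)‖ * ‖χ _‖ * (((pm.1:ℕ):ℝ) ^ (-(((pm.2:ℝ)+1)*s.re)))
        ≤ (((pm.2:ℝ)+1)^2 * 1) * (((pm.1:ℕ):ℝ) ^ (-(((pm.2:ℝ)+1)*s.re))) := by
          apply mul_le_mul_of_nonneg_right _ hpos
          exact mul_le_mul hc2 (chi_norm_le χ _) (norm_nonneg _) (by positivity)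
      _ = ((pm.2:ℝ)+1)^2 * (((pm.1:ℕ):ℝ) ^ (-(((pm.2:ℝ)+1)*s.re))) := by ring
  · rw [if_neg h3, if_neg (by omega : ¬ 2 ≤ pm.2), norm_zero]

/-- Auxiliary: the even-exponent part of the series for `F̃(s, χ; 1)`. -/
noncomputable def eTerm (q : ℕ) (χ : DirichletCharacter ℂ q) (s : ℂ)
    (pm : Nat.Primes × ℕ) : ℂ :=
  if 2 ∣ (pm.2 + 1) then
    (1 / ((pm.2 : ℂ) + 1)) * χ ((((pm.1 : ℕ) ^ (pm.2 + 1) : ℕ)) : ZMod q) *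
      (((pm.1 : ℕ) : ℂ)) ^ (-((((pm.2 : ℂ) + 1)) * s))
  else 0

/-- Auxiliary: the even-exponent part of the series for `F̃(s, χ; 2)`. -/
noncomputable def e2Term (q : ℕ) (χ : DirichletCharacter ℂ q) (s : ℂ)
    (pm : Nat.Primes × ℕ) : ℂ :=
  if 2 ∣ (pm.2 + 1) then
    (2 / ((pm.2 : ℂ) + 1)) * χ ((((pm.1 : ℕ) ^ (pm.2 + 1) : ℕ)) : ZMod q) *
      (((pm.1 : ℕ) : ℂ)) ^ (-((((pm.2 : ℂ) + 1)) * s))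
  else 0

lemma summable_eTerm {q : ℕ} [NeZero q] (χ : DirichletCharacter ℂ q) {s : ℂ} (hs : 1 < s.re) :
    Summable (fun pm : Nat.Primes × ℕ => ‖eTerm q χ s pm‖) := by
  refine summable_of_bound (by linarith) 0 0 (by push_cast; linarith) (fun pm => ?_)
  rw [if_pos (Nat.zero_le _), pow_zero, one_mul]
  unfold eTerm
  have hpos : (0:ℝ) ≤ ((pm.1:ℕ):ℝ) ^ (-(((pm.2:ℝ)+1)*s.re)) := Real.rpow_nonneg (by positivity) _
  split
  · rw [norm_mul, norm_mul, norm_term]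
    have hco : ‖(1:ℂ) / ((pm.2:ℂ)+1)‖ ≤ 1 := by
      rw [norm_div, norm_one]
      have : ((pm.2:ℂ)+1) = (((pm.2+1 : ℕ)):ℂ) := by push_cast; ring
      rw [this, Complex.norm_natCast, div_le_one (by positivity)]
      push_cast; linarith [Nat.cast_nonneg (α := ℝ) pm.2]
    calc ‖(1:ℂ)/((pm.2:ℂ)+1)‖ * ‖χ _‖ * (((pm.1:ℕ):ℝ) ^ (-(((pm.2:ℝ)+1)*s.re)))
        ≤ 1 * 1 * (((pm.1:ℕ):ℝ) ^ (-(((pm.2:ℝ)+1)*s.re))) := by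
          apply mul_le_mul_of_nonneg_right _ hpos
          exact mul_le_mul hco (chi_norm_le χ _) (norm_nonneg _) (by norm_num)
      _ = (((pm.1:ℕ):ℝ) ^ (-(((pm.2:ℝ)+1)*s.re))) := by ring
  · rw [norm_zero]; exact hpos

lemma summable_e2Term {q : ℕ} [NeZero q] (χ : DirichletCharacter ℂ q) {s : ℂ} (hs : 1 < s.re) :
    Summable (fun pm : Nat.Primes × ℕ => ‖e2Term q χ s pm‖) := by
  refine summable_of_bound (by linarith) 0 0 (by push_cast; linarith) (fun pm => ?_)
  rw [if_pos (Nat.zero_le _), pow_zero, one_mul]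
  unfold e2Term
  have hpos : (0:ℝ) ≤ ((pm.1:ℕ):ℝ) ^ (-(((pm.2:ℝ)+1)*s.re)) := Real.rpow_nonneg (by positivity) _
  split
  · rename_i hdvd
    rw [norm_mul, norm_mul, norm_term]
    have hm1 : 1 ≤ pm.2 := by omega
    have hm1' : (1:ℝ) ≤ (pm.2:ℝ) := by exact_mod_cast hm1
    have hco : ‖(2:ℂ) / ((pm.2:ℂ)+1)‖ ≤ 1 := by
      rw [norm_div, Complex.norm_ofNat]
      have : ((pm.2:ℂ)+1) = (((pm.2+1 : ℕ)):ℂ) := by push_cast; ring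
      rw [this, Complex.norm_natCast, div_le_one (by positivity)]
      push_cast; linarith
    calc ‖(2:ℂ)/((pm.2:ℂ)+1)‖ * ‖χ _‖ * (((pm.1:ℕ):ℝ) ^ (-(((pm.2:ℝ)+1)*s.re)))
        ≤ 1 * 1 * (((pm.1:ℕ):ℝ) ^ (-(((pm.2:ℝ)+1)*s.re))) := by
          apply mul_le_mul_of_nonneg_right _ hpos
          exact mul_le_mul hco (chi_norm_le χ _) (norm_nonneg _) (by norm_num)
      _ = (((pm.1:ℕ):ℝ) ^ (-(((pm.2:ℝ)+1)*s.re))) := by ring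
  · rw [norm_zero]; exact hpos

end Aux

-- pointwise identity 1
lemma ident1 (q : ℕ) [NeZero q] (χ : DirichletCharacter ℂ q) (s : ℂ) (pm : Nat.Primes × ℕ) :
    χ ((((pm.1 : ℕ) ^ (pm.2 + 1) : ℕ)) : ZMod q) *
      (((pm.1 : ℕ) : ℂ)) ^ (-((((pm.2 : ℂ) + 1)) * s)) =
    logLTerm q χ s pm + eTerm q χ s pm + G1Term q χ s pm := by
  obtain ⟨p, m⟩ := pm
  set X := χ ((((p : ℕ) ^ (m + 1) : ℕ)) : ZMod q) with hX
  set P := (((p : ℕ) : ℂ)) ^ (-((((m : ℂ) + 1)) * s)) with hP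
  have hpne : ((p:ℕ):ℂ) ≠ 0 := by
    exact_mod_cast Nat.cast_ne_zero.mpr p.prop.pos.ne'
  have hpow : (((p : ℕ) : ℂ)) ^ ((((m : ℂ) + 1)) * s) = P⁻¹ := by
    rw [hP, ← Complex.cpow_neg, neg_neg]
  have hpowne : (((p : ℕ) : ℂ)) ^ ((((m : ℂ) + 1)) * s) ≠ 0 := by
    rw [Ne, Complex.cpow_eq_zero_iff]
    tauto
  have hPval : P = ((((p : ℕ) : ℂ)) ^ ((((m : ℂ) + 1)) * s))⁻¹ := by
    rw [hP, Complex.cpow_neg]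
  have hMne : ((m:ℂ)+1) ≠ 0 := Nat.cast_add_one_ne_zero m
  unfold logLTerm eTerm G1Term
  dsimp only
  rw [← hX, ← hP, hPval]
  rcases Nat.lt_or_ge m 2 with hm | hm
  · interval_cases m
    · norm_num [div_eq_mul_inv]
    · norm_num [cCoeff]
      field_simp
      ring
  · rw [if_pos (by omega : 3 ≤ m + 1)]
    rcases Nat.even_or_odd (m+1) with he | ho
    · have hdvd : 2 ∣ (m+1) := by have := Nat.even_iff.mp he; omega
      have hnotodd : ¬ Odd (m+1) := Nat.not_odd_iff_even.mpr he
      rw [if_pos hdvd]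
      unfold cCoeff
      rw [if_neg hnotodd]
      push_cast
      field_simp
      ring
    · have hdvd : ¬ 2 ∣ (m+1) := by have := Nat.odd_iff.mp ho; omega
      rw [if_neg hdvd]
      unfold cCoeff
      rw [if_pos ho]
      push_cast
      field_simp
      ring

-- pointwise identity 2
lemma ident2 (q : ℕ) [NeZero q] (χ : DirichletCharacter ℂ q) (s : ℂ) (pm : Nat.Primes × ℕ) :
    (pm.2 : ℂ) * χ ((((pm.1 : ℕ) ^ (pm.2 + 1) : ℕ)) : ZMod q) *
      (((pm.1 : ℕ) : ℂ)) ^ (-((((pm.2 : ℂ) + 1)) * s)) =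
    e2Term q χ s pm + G2Term q χ s pm := by
  obtain ⟨p, m⟩ := pm
  set X := χ ((((p : ℕ) ^ (m + 1) : ℕ)) : ZMod q) with hX
  set P := (((p : ℕ) : ℂ)) ^ (-((((m : ℂ) + 1)) * s)) with hP
  have hMne : ((m:ℂ)+1) ≠ 0 := Nat.cast_add_one_ne_zero m
  unfold e2Term G2Term
  dsimp only
  rw [← hX, ← hP]
  rcases Nat.lt_or_ge m 2 with hm | hm
  · interval_cases m
    · norm_num
    · norm_num [dCoeff]
  · rw [if_pos (by omega : 3 ≤ m + 1)]
    rcases Nat.even_or_odd (m+1) with he | ho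
    · have hdvd : 2 ∣ (m+1) := by have := Nat.even_iff.mp he; omega
      have hnotodd : ¬ Odd (m+1) := Nat.not_odd_iff_even.mpr he
      rw [if_pos hdvd]
      unfold dCoeff
      rw [if_neg hnotodd]
      push_cast
      field_simp
      ring
    · have hdvd : ¬ 2 ∣ (m+1) := by have := Nat.odd_iff.mp ho; omega
      rw [if_neg hdvd]
      unfold dCoeff
      rw [if_pos ho]
      push_cast
      ring

noncomputable def doubler : Nat.Primes × ℕ → Nat.Primes × ℕ := fun pk => (pk.1, 2 * pk.2 + 1)

lemma doubler_inj : Function.Injective doubler := by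
  rintro ⟨p, k⟩ ⟨p', k'⟩ h
  simp only [doubler, Prod.mk.injEq] at h
  obtain ⟨h1, h2⟩ := h
  exact Prod.ext h1 (by omega)

lemma eTerm_support (q : ℕ) (χ : DirichletCharacter ℂ q) (s : ℂ) :
    Function.support (eTerm q χ s) ⊆ Set.range doubler := by
  rintro ⟨p, m⟩ hpm
  by_cases h : 2 ∣ (m + 1)
  · obtain ⟨t, ht⟩ := h
    refine ⟨(p, t - 1), ?_⟩
    simp only [doubler, Prod.mk.injEq]
    exact ⟨trivial, by omega⟩
  · exfalso; apply hpm; unfold eTerm; rw [if_neg h]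

lemma e2Term_support (q : ℕ) (χ : DirichletCharacter ℂ q) (s : ℂ) :
    Function.support (e2Term q χ s) ⊆ Set.range doubler := by
  rintro ⟨p, m⟩ hpm
  by_cases h : 2 ∣ (m + 1)
  · obtain ⟨t, ht⟩ := h
    refine ⟨(p, t - 1), ?_⟩
    simp only [doubler, Prod.mk.injEq]
    exact ⟨trivial, by omega⟩
  · exfalso; apply hpm; unfold e2Term; rw [if_neg h]

lemma eTerm_comp (q : ℕ) [NeZero q] (χ : DirichletCharacter ℂ q) (s : ℂ)
    (pk : Nat.Primes × ℕ) :
    eTerm q χ s (doubler pk) = (1/2) * logLTerm q (χ ^ 2) (2 * s) pk := by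
  obtain ⟨p, k⟩ := pk
  unfold eTerm logLTerm doubler
  dsimp only
  rw [if_pos (by omega : 2 ∣ (2 * k + 1 + 1))]
  have hX : χ ((((p : ℕ) ^ (2 * k + 1 + 1) : ℕ)) : ZMod q) =
      (χ ((((p : ℕ) ^ (k + 1) : ℕ)) : ZMod q)) ^ 2 := by
    rw [show (p:ℕ) ^ (2 * k + 1 + 1) = ((p:ℕ) ^ (k+1)) ^ 2 by ring]
    push_cast
    rw [map_pow]
  have hχ2 : (χ ^ 2) ((((p : ℕ) ^ (k + 1) : ℕ)) : ZMod q) =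
      (χ ((((p : ℕ) ^ (k + 1) : ℕ)) : ZMod q)) ^ 2 :=
    MulChar.pow_apply' χ two_ne_zero _
  have hexp : -((((2 * k + 1 : ℕ) : ℂ) + 1) * s) = -(((k : ℂ) + 1) * (2 * s)) := by
    push_cast; ring
  have hpne : ((p:ℕ):ℂ) ≠ 0 := Nat.cast_ne_zero.mpr p.prop.pos.ne'
  have hpowne : (((p : ℕ) : ℂ)) ^ ((((k : ℂ) + 1)) * (2 * s)) ≠ 0 := by
    rw [Ne, Complex.cpow_eq_zero_iff]; tauto
  have hkne : ((k:ℂ)+1) ≠ 0 := Nat.cast_add_one_ne_zero k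
  rw [hX, hχ2, hexp, Complex.cpow_neg]
  have h2k : (((2 * k + 1 : ℕ) : ℂ) + 1) = 2 * ((k:ℂ) + 1) := by push_cast; ring
  rw [h2k]
  simp only [div_eq_mul_inv, mul_inv]
  ring

lemma e2Term_comp (q : ℕ) [NeZero q] (χ : DirichletCharacter ℂ q) (s : ℂ)
    (pk : Nat.Primes × ℕ) :
    e2Term q χ s (doubler pk) = logLTerm q (χ ^ 2) (2 * s) pk := by
  obtain ⟨p, k⟩ := pk
  unfold e2Term logLTerm doubler
  dsimp only
  rw [if_pos (by omega : 2 ∣ (2 * k + 1 + 1))]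
  have hX : χ ((((p : ℕ) ^ (2 * k + 1 + 1) : ℕ)) : ZMod q) =
      (χ ((((p : ℕ) ^ (k + 1) : ℕ)) : ZMod q)) ^ 2 := by
    rw [show (p:ℕ) ^ (2 * k + 1 + 1) = ((p:ℕ) ^ (k+1)) ^ 2 by ring]
    push_cast
    rw [map_pow]
  have hχ2 : (χ ^ 2) ((((p : ℕ) ^ (k + 1) : ℕ)) : ZMod q) =
      (χ ((((p : ℕ) ^ (k + 1) : ℕ)) : ZMod q)) ^ 2 :=
    MulChar.pow_apply' χ two_ne_zero _
  have hexp : -((((2 * k + 1 : ℕ) : ℂ) + 1) * s) = -(((k : ℂ) + 1) * (2 * s)) := by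
    push_cast; ring
  have hpne : ((p:ℕ):ℂ) ≠ 0 := Nat.cast_ne_zero.mpr p.prop.pos.ne'
  have hpowne : (((p : ℕ) : ℂ)) ^ ((((k : ℂ) + 1)) * (2 * s)) ≠ 0 := by
    rw [Ne, Complex.cpow_eq_zero_iff]; tauto
  have hkne : ((k:ℂ)+1) ≠ 0 := Nat.cast_add_one_ne_zero k
  rw [hX, hχ2, hexp, Complex.cpow_neg]
  have h2k : (((2 * k + 1 : ℕ) : ℂ) + 1) = 2 * ((k:ℂ) + 1) := by push_cast; ring
  rw [h2k]
  simp only [div_eq_mul_inv, mul_inv]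
  ring

lemma eTerm_tsum (q : ℕ) [NeZero q] (χ : DirichletCharacter ℂ q) (s : ℂ) :
    ∑' pm : Nat.Primes × ℕ, eTerm q χ s pm =
      (1/2) * (∑' pk : Nat.Primes × ℕ, logLTerm q (χ ^ 2) (2 * s) pk) := by
  rw [← doubler_inj.tsum_eq (eTerm_support q χ s), ← tsum_mul_left]
  exact tsum_congr (fun pk => eTerm_comp q χ s pk)

lemma e2Term_tsum (q : ℕ) [NeZero q] (χ : DirichletCharacter ℂ q) (s : ℂ) :
    ∑' pm : Nat.Primes × ℕ, e2Term q χ s pm =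
      ∑' pk : Nat.Primes × ℕ, logLTerm q (χ ^ 2) (2 * s) pk := by
  rw [← doubler_inj.tsum_eq (e2Term_support q χ s)]
  exact tsum_congr (fun pk => e2Term_comp q χ s pk)

/-- **Formulas (2.8) and (2.9)** (Meng): for a non-principal character `χ`,
`F̃(s, χ; 1) = log L(s, χ) + (1/2) log L(2s, χ²) + G̃₁(s)` and
`F̃(s, χ; 2) = log L(2s, χ²) + G̃₂(s)`, the series `G̃₁, G̃₂` converging absolutely
for `Re(s) > 1/3`. -/
theorem Ftilde_logL_formulas (q : ℕ) [NeZero q] (χ : DirichletCharacter ℂ q)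
    (hχ : χ ≠ 1) :
    ((∀ s : ℂ, 1/3 < s.re → Summable (fun pm : Nat.Primes × ℕ => ‖G1Term q χ s pm‖)) ∧
      ∀ s : ℂ, 1 < s.re →
        ∑' pm : Nat.Primes × ℕ,
            χ ((((pm.1 : ℕ) ^ (pm.2 + 1) : ℕ)) : ZMod q) *
              (((pm.1 : ℕ) : ℂ)) ^ (-((((pm.2 : ℂ) + 1)) * s)) =
          logL q χ s + (1/2) * logL q (χ ^ 2) (2 * s) +
            ∑' pm : Nat.Primes × ℕ, G1Term q χ s pm) ∧
    ((∀ s : ℂ, 1/3 < s.re → Summable (fun pm : Nat.Primes × ℕ => ‖G2Term q χ s pm‖)) ∧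
      ∀ s : ℂ, 1 < s.re →
        ∑' pm : Nat.Primes × ℕ,
            (pm.2 : ℂ) * χ ((((pm.1 : ℕ) ^ (pm.2 + 1) : ℕ)) : ZMod q) *
              (((pm.1 : ℕ) : ℂ)) ^ (-((((pm.2 : ℂ) + 1)) * s)) =
          logL q (χ ^ 2) (2 * s) + ∑' pm : Nat.Primes × ℕ, G2Term q χ s pm) := by
  refine ⟨⟨fun s hs => summable_G1 χ hs, fun s hs => ?_⟩,
    ⟨fun s hs => summable_G2 χ hs, fun s hs => ?_⟩⟩
  · have hlog1 : Summable (logLTerm q χ s) := (summable_logLTerm χ hs).of_norm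
    have he : Summable (eTerm q χ s) := (summable_eTerm χ hs).of_norm
    have hG : Summable (G1Term q χ s) := (summable_G1 χ (by linarith)).of_norm
    calc ∑' pm : Nat.Primes × ℕ,
          χ ((((pm.1 : ℕ) ^ (pm.2 + 1) : ℕ)) : ZMod q) *
            (((pm.1 : ℕ) : ℂ)) ^ (-((((pm.2 : ℂ) + 1)) * s))
        = ∑' pm : Nat.Primes × ℕ,
            (logLTerm q χ s pm + eTerm q χ s pm + G1Term q χ s pm) :=
          tsum_congr (ident1 q χ s)
      _ = (∑' pm : Nat.Primes × ℕ, (logLTerm q χ s pm + eTerm q χ s pm)) +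
            ∑' pm : Nat.Primes × ℕ, G1Term q χ s pm := Summable.tsum_add (hlog1.add he) hG
      _ = (∑' pm : Nat.Primes × ℕ, logLTerm q χ s pm) +
            (∑' pm : Nat.Primes × ℕ, eTerm q χ s pm) +
            ∑' pm : Nat.Primes × ℕ, G1Term q χ s pm := by rw [Summable.tsum_add hlog1 he]
      _ = logL q χ s + (1/2) * logL q (χ ^ 2) (2 * s) +
            ∑' pm : Nat.Primes × ℕ, G1Term q χ s pm := by
          rw [eTerm_tsum q χ s]
          rfl
  · have he : Summable (e2Term q χ s) := (summable_e2Term χ hs).of_norm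
    have hG : Summable (G2Term q χ s) := (summable_G2 χ (by linarith)).of_norm
    calc ∑' pm : Nat.Primes × ℕ,
          (pm.2 : ℂ) * χ ((((pm.1 : ℕ) ^ (pm.2 + 1) : ℕ)) : ZMod q) *
            (((pm.1 : ℕ) : ℂ)) ^ (-((((pm.2 : ℂ) + 1)) * s))
        = ∑' pm : Nat.Primes × ℕ, (e2Term q χ s pm + G2Term q χ s pm) :=
          tsum_congr (ident2 q χ s)
      _ = (∑' pm : Nat.Primes × ℕ, e2Term q χ s pm) +
            ∑' pm : Nat.Primes × ℕ, G2Term q χ s pm := Summable.tsum_add he hG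
      _ = logL q (χ ^ 2) (2 * s) + ∑' pm : Nat.Primes × ℕ, G2Term q χ s pm := by
          rw [e2Term_tsum q χ s]
          rfl
end

section
/- For all integers k ≥ 1 and m ≥ 0 there exists a constant C = C(m, k) > 0 such that for every real x ≥ 16 and with δ = 1/10: ∫₀^δ |(log σ − iπ)^k − (log σ + iπ)^k| · σ^m · x^{−σ} dσ ≤ C · (log log x)^{k−1} / (log x)^{m+1}. -/
open Complex Real

section AuxHankel

open MeasureTheory Set Finset

open Complex Real MeasureTheory Set Finset


lemma aux_norm_diff (k : ℕ) {σ : ℝ} (h1 : 0 < σ) (h2 : σ ≤ 1) :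
    ‖((Real.log σ : ℂ) - Real.pi * Complex.I) ^ k -
        ((Real.log σ : ℂ) + Real.pi * Complex.I) ^ k‖ ≤
      2 * Real.pi * k * (Real.pi - Real.log σ) ^ (k - 1) := by
  set a : ℂ := (Real.log σ : ℂ) - Real.pi * Complex.I with ha
  set b : ℂ := (Real.log σ : ℂ) + Real.pi * Complex.I with hb
  have hlog : Real.log σ ≤ 0 := Real.log_nonpos h1.le h2
  have hM : (0:ℝ) ≤ Real.pi - Real.log σ := by linarith [Real.pi_pos]
  have hpiI : ‖(Real.pi : ℂ) * Complex.I‖ = Real.pi := by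
    rw [norm_mul, Complex.norm_I, mul_one, Complex.norm_real,
      Real.norm_of_nonneg Real.pi_pos.le]
  have hna : ‖a‖ ≤ Real.pi - Real.log σ := by
    calc ‖a‖ ≤ ‖(Real.log σ : ℂ)‖ + ‖(Real.pi : ℂ) * Complex.I‖ := norm_sub_le _ _
    _ = |Real.log σ| + Real.pi := by rw [hpiI, Complex.norm_real, Real.norm_eq_abs]
    _ = Real.pi - Real.log σ := by rw [abs_of_nonpos hlog]; ring
  have hnb : ‖b‖ ≤ Real.pi - Real.log σ := by
    calc ‖b‖ ≤ ‖(Real.log σ : ℂ)‖ + ‖(Real.pi : ℂ) * Complex.I‖ := norm_add_le _ _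
    _ = |Real.log σ| + Real.pi := by rw [hpiI, Complex.norm_real, Real.norm_eq_abs]
    _ = Real.pi - Real.log σ := by rw [abs_of_nonpos hlog]; ring
  have key : a ^ k - b ^ k = (∑ i ∈ range k, a ^ i * b ^ (k - 1 - i)) * (a - b) :=
    (geom_sum₂_mul a b k).symm
  rw [key]
  have hab : ‖a - b‖ = 2 * Real.pi := by
    have h : a - b = -(2 * (Real.pi * Complex.I)) := by rw [ha, hb]; ring
    rw [h, norm_neg, norm_mul, hpiI]
    simp
  rw [norm_mul, hab]
  have hsum : ‖∑ i ∈ range k, a ^ i * b ^ (k - 1 - i)‖ ≤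
      k * (Real.pi - Real.log σ) ^ (k - 1) := by
    calc ‖∑ i ∈ range k, a ^ i * b ^ (k - 1 - i)‖
        ≤ ∑ i ∈ range k, ‖a ^ i * b ^ (k - 1 - i)‖ := norm_sum_le _ _
    _ ≤ ∑ i ∈ range k, (Real.pi - Real.log σ) ^ (k - 1) := by
        refine Finset.sum_le_sum fun i hi => ?_
        rw [norm_mul, norm_pow, norm_pow]
        have hik : i ≤ k - 1 := Nat.le_sub_one_of_lt (Finset.mem_range.mp hi)
        calc ‖a‖ ^ i * ‖b‖ ^ (k - 1 - i)
            ≤ (Real.pi - Real.log σ) ^ i * (Real.pi - Real.log σ) ^ (k - 1 - i) := by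
              exact mul_le_mul (pow_le_pow_left₀ (norm_nonneg _) hna i)
                (pow_le_pow_left₀ (norm_nonneg _) hnb _) (by positivity) (by positivity)
        _ = (Real.pi - Real.log σ) ^ (k - 1) := by
              rw [← pow_add, Nat.add_sub_cancel' hik]
    _ = k * (Real.pi - Real.log σ) ^ (k - 1) := by
        rw [Finset.sum_const, Finset.card_range, nsmul_eq_mul]
  calc ‖∑ i ∈ range k, a ^ i * b ^ (k - 1 - i)‖ * (2 * Real.pi)
      ≤ (k * (Real.pi - Real.log σ) ^ (k - 1)) * (2 * Real.pi) := by
        exact mul_le_mul_of_nonneg_right hsum (by positivity)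
  _ = 2 * Real.pi * k * (Real.pi - Real.log σ) ^ (k - 1) := by ring


lemma aux_log_pow_le (n : ℕ) {v : ℝ} (hv : 1 ≤ v) :
    Real.log v ^ n ≤ (2 * n) ^ n * v ^ ((1:ℝ)/2) := by
  rcases Nat.eq_zero_or_pos n with rfl | hn
  · simpa using Real.one_le_rpow hv (by norm_num)
  · have hv0 : (0:ℝ) < v := lt_of_lt_of_le one_pos hv
    have hε : (0:ℝ) < 1 / (2 * n) := by positivity
    have hstep : Real.log v ≤ (2 * n) * v ^ ((1:ℝ)/(2 * n)) := by
      have h1 : Real.log (v ^ ((1:ℝ)/(2*n))) ≤ v ^ ((1:ℝ)/(2*n)) := by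
        have h := Real.log_le_sub_one_of_pos (Real.rpow_pos_of_pos hv0 ((1:ℝ)/(2*n)))
        linarith
      rw [Real.log_rpow hv0] at h1
      have h2n : (0:ℝ) < 2 * n := by positivity
      calc Real.log v = (2*n) * ((1:ℝ)/(2*n) * Real.log v) := by field_simp
      _ ≤ (2*n) * v ^ ((1:ℝ)/(2*n)) := by
          exact mul_le_mul_of_nonneg_left h1 h2n.le
    have hlog0 : 0 ≤ Real.log v := Real.log_nonneg hv
    calc Real.log v ^ n ≤ ((2 * n) * v ^ ((1:ℝ)/(2 * n))) ^ n :=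
          pow_le_pow_left₀ hlog0 hstep n
    _ = (2*n)^n * (v ^ ((1:ℝ)/(2 * n))) ^ n := mul_pow _ _ n
    _ = (2*n)^n * v ^ ((1:ℝ)/2) := by
        rw [← Real.rpow_natCast (v ^ ((1:ℝ)/(2*n))) n, ← Real.rpow_mul hv0.le]
        have hne : (n:ℝ) ≠ 0 := Nat.cast_ne_zero.mpr hn.ne'
        have he : (1:ℝ)/(2*n) * n = 1/2 := by field_simp
        rw [he]


lemma aux_pow_bound (n : ℕ) {L σ : ℝ} (hL : 1 ≤ Real.log L) (hL0 : 0 < L)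
    (hσ : 0 < σ) (hσ1 : σ ≤ 1) :
    (Real.pi - Real.log σ) ^ n ≤
      2 ^ n * ((Real.pi + 1) ^ n * Real.log L ^ n
        + (2 * n) ^ n * (L * σ) ^ (-(1/2) : ℝ)) := by
  have hπ := Real.pi_pos
  have hlogσ : Real.log σ ≤ 0 := Real.log_nonpos hσ.le hσ1
  have hM : (0:ℝ) ≤ Real.pi - Real.log σ := by linarith
  have hLσ : 0 < L * σ := mul_pos hL0 hσ
  have hrp : (0:ℝ) < (L * σ) ^ (-(1/2) : ℝ) := Real.rpow_pos_of_pos hLσ _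
  have hA0 : (0:ℝ) ≤ (Real.pi + 1) * Real.log L := by positivity
  rcases le_or_gt 1 (L * σ) with h | h
  · -- easy case : -log σ ≤ log L
    have h1 : Real.pi - Real.log σ ≤ (Real.pi + 1) * Real.log L := by
      have hls : -Real.log L ≤ Real.log σ := by
        have : (1:ℝ)/L ≤ σ := by
          rw [div_le_iff₀ hL0]; linarith [h]
        calc -Real.log L = Real.log (1/L) := by rw [one_div, Real.log_inv]
        _ ≤ Real.log σ := Real.log_le_log (by positivity) this
      nlinarith
    calc (Real.pi - Real.log σ) ^ n ≤ ((Real.pi + 1) * Real.log L) ^ n :=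
          pow_le_pow_left₀ hM h1 n
    _ = (Real.pi + 1) ^ n * Real.log L ^ n := mul_pow _ _ n
    _ ≤ 2 ^ n * ((Real.pi + 1) ^ n * Real.log L ^ n
          + (2 * n) ^ n * (L * σ) ^ (-(1/2) : ℝ)) := by
        have h2 : (1:ℝ) ≤ 2 ^ n := one_le_pow₀ one_le_two
        have hT : (0:ℝ) ≤ (Real.pi + 1) ^ n * Real.log L ^ n := by positivity
        have hS : (0:ℝ) ≤ (2 * (n:ℝ)) ^ n * (L * σ) ^ (-(1/2) : ℝ) := by positivity
        calc (Real.pi + 1) ^ n * Real.log L ^ n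
            ≤ (Real.pi + 1) ^ n * Real.log L ^ n
              + (2 * (n:ℝ)) ^ n * (L * σ) ^ (-(1/2) : ℝ) := by linarith
        _ ≤ 2 ^ n * ((Real.pi + 1) ^ n * Real.log L ^ n
              + (2 * (n:ℝ)) ^ n * (L * σ) ^ (-(1/2) : ℝ)) :=
            le_mul_of_one_le_left (by linarith) h2
  · -- hard case
    set v : ℝ := (L * σ)⁻¹ with hv
    have hv1 : 1 ≤ v := one_le_inv_iff₀.mpr ⟨hLσ, h.le⟩
    set A : ℝ := (Real.pi + 1) * Real.log L with hA
    set B : ℝ := Real.log v with hB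
    have hB0 : 0 ≤ B := Real.log_nonneg hv1
    have hid : Real.pi - Real.log σ ≤ A + B := by
      have : B = -Real.log L - Real.log σ := by
        rw [hB, hv, Real.log_inv, Real.log_mul hL0.ne' hσ.ne']; ring
      nlinarith
    have hmax : A + B ≤ 2 * max A B := by
      rcases le_total A B with hab | hab
      · rw [max_eq_right hab]; linarith
      · rw [max_eq_left hab]; linarith
    have hmaxpow : (max A B) ^ n ≤ A ^ n + B ^ n := by
      rcases le_total A B with hab | hab
      · rw [max_eq_right hab]
        nlinarith [pow_nonneg hA0 n]
      · rw [max_eq_left hab]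
        nlinarith [pow_nonneg hB0 n]
    have hBn : B ^ n ≤ (2 * n) ^ n * (L * σ) ^ (-(1/2) : ℝ) := by
      have := aux_log_pow_le n hv1
      have hveq : v ^ ((1:ℝ)/2) = (L * σ) ^ (-(1/2) : ℝ) := by
        rw [hv, Real.inv_rpow hLσ.le, ← Real.rpow_neg hLσ.le]
      rw [hveq] at this
      exact this
    calc (Real.pi - Real.log σ) ^ n ≤ (A + B) ^ n := pow_le_pow_left₀ hM hid n
    _ ≤ (2 * max A B) ^ n := pow_le_pow_left₀ (by positivity) hmax n
    _ = 2 ^ n * (max A B) ^ n := mul_pow _ _ n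
    _ ≤ 2 ^ n * (A ^ n + B ^ n) := by
        exact mul_le_mul_of_nonneg_left hmaxpow (by positivity)
    _ ≤ 2 ^ n * ((Real.pi + 1) ^ n * Real.log L ^ n
          + (2 * n) ^ n * (L * σ) ^ (-(1/2) : ℝ)) := by
        have hAn : A ^ n = (Real.pi + 1) ^ n * Real.log L ^ n := mul_pow _ _ n
        rw [hAn] at *
        exact mul_le_mul_of_nonneg_left (by linarith [hBn]) (by positivity)

end AuxHankel

open MeasureTheory Set Finset in
set_option maxHeartbeats 1000000 in
/-- **Lemma 5.1** (Meng): for `k ≥ 1`, `m ≥ 0` there is `C = C(m,k) > 0` such that for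
all `x ≥ 16`, with `δ = 1/10`,
`∫₀^δ |(log σ - iπ)^k - (log σ + iπ)^k| σ^m x^{-σ} dσ ≤ C (log log x)^{k-1}/(log x)^{m+1}`. -/
theorem hankel_horizontal_estimate (k m : ℕ) (hk : 1 ≤ k) :
    ∃ C : ℝ, 0 < C ∧ ∀ x : ℝ, 16 ≤ x →
      (∫ σ in (0:ℝ)..(1/10 : ℝ),
          ‖((Real.log σ : ℂ) - Real.pi * Complex.I) ^ k -
              ((Real.log σ : ℂ) + Real.pi * Complex.I) ^ k‖ * σ ^ m * x ^ (-σ))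
        ≤ C * Real.log (Real.log x) ^ (k - 1) / Real.log x ^ (m + 1) := by
  obtain ⟨n, rfl⟩ : ∃ n, k = n + 1 := ⟨k - 1, (Nat.succ_pred_eq_of_pos hk).symm⟩
  have hπ := Real.pi_pos
  set K1 : ℝ := 2 * Real.pi * (n + 1) * 2 ^ n * (Real.pi + 1) ^ n with hK1
  set K2 : ℝ := 2 * Real.pi * (n + 1) * 2 ^ n * (2 * n) ^ n with hK2
  have hK1pos : 0 < K1 := by positivity
  have hK2nn : 0 ≤ K2 := by positivity
  have hΓ1 : 0 < Real.Gamma ((m : ℝ) + 1) := Real.Gamma_pos_of_pos (by positivity)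
  have hΓ2 : 0 < Real.Gamma ((m : ℝ) + 1/2) := Real.Gamma_pos_of_pos (by positivity)
  refine ⟨K1 * Real.Gamma ((m : ℝ) + 1) + K2 * Real.Gamma ((m : ℝ) + 1/2),
    add_pos_of_pos_of_nonneg (by positivity) (by positivity), fun x hx => ?_⟩
  set C : ℝ := K1 * Real.Gamma ((m : ℝ) + 1) + K2 * Real.Gamma ((m : ℝ) + 1/2) with hC
  set L : ℝ := Real.log x with hLdef
  have hx0 : (0:ℝ) < x := by linarith
  -- L ≥ e
  have hLe : Real.exp 1 ≤ L := by
    have h16 : Real.log 16 ≤ L := Real.log_le_log (by norm_num) hx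
    have hl2 : Real.log 16 = 4 * Real.log 2 := by
      rw [show (16:ℝ) = 2 ^ 4 by norm_num, Real.log_pow]; push_cast; ring
    have he : Real.exp 1 < 2.7182818286 := Real.exp_one_lt_d9
    have h2 : 0.6931471803 < Real.log 2 := Real.log_two_gt_d9
    nlinarith
  have hL0 : (0:ℝ) < L := lt_of_lt_of_le (Real.exp_pos 1) hLe
  have hL1 : 1 ≤ Real.log L := by
    have := Real.log_le_log (Real.exp_pos 1) hLe
    rwa [Real.log_exp] at this
  set W : ℝ := Real.log L ^ n with hW
  have hW1 : 1 ≤ W := one_le_pow₀ hL1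
  have hW0 : 0 < W := lt_of_lt_of_le one_pos hW1
  set c : ℝ := -(1/2) with hc
  set g : ℝ → ℝ := fun σ => K1 * W * (σ ^ m * Real.exp (-(L * σ)))
      + K2 * L ^ c * (σ ^ ((m:ℝ) - 1/2) * Real.exp (-(L * σ))) with hg
  -- integrability
  have hint1 : IntegrableOn (fun σ : ℝ => σ ^ m * Real.exp (-(L * σ))) (Ioi 0) := by
    have := integrableOn_rpow_mul_exp_neg_mul_rpow
      (show (-1:ℝ) < (m:ℕ) by exact_mod_cast neg_one_lt_zero.trans_le (Nat.cast_nonneg m))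
      one_pos hL0
    simpa [Real.rpow_one, Real.rpow_natCast, neg_mul] using this
  have hint2 : IntegrableOn (fun σ : ℝ => σ ^ ((m:ℝ) - 1/2) * Real.exp (-(L * σ))) (Ioi 0) := by
    have hm : (-1:ℝ) < (m:ℝ) - 1/2 := by
      have : (0:ℝ) ≤ (m:ℝ) := Nat.cast_nonneg m
      linarith
    have := integrableOn_rpow_mul_exp_neg_mul_rpow hm one_pos hL0
    simpa [Real.rpow_one, neg_mul] using this
  have hgInt : IntegrableOn g (Ioi 0) := (hint1.const_mul _).add (hint2.const_mul _)
  have hLc : (0:ℝ) ≤ L ^ c := Real.rpow_nonneg hL0.le _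
  have hg0 : ∀ σ : ℝ, 0 < σ → 0 ≤ g σ := by
    intro σ hσ
    have h1 : (0:ℝ) ≤ σ ^ m * Real.exp (-(L * σ)) := by positivity
    have h2 : (0:ℝ) ≤ σ ^ ((m:ℝ) - 1/2) * Real.exp (-(L * σ)) :=
      mul_nonneg (Real.rpow_nonneg hσ.le _) (Real.exp_pos _).le
    have := mul_nonneg (mul_nonneg hK2nn hLc) h2
    have := mul_nonneg (mul_nonneg hK1pos.le hW0.le) h1
    simp only [hg]
    nlinarith
  -- pointwise bound on Ioc 0 (1/10)
  have hptwise : ∀ σ : ℝ, σ ∈ Ioc (0:ℝ) (1/10) →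
      ‖((Real.log σ : ℂ) - Real.pi * Complex.I) ^ (n+1) -
          ((Real.log σ : ℂ) + Real.pi * Complex.I) ^ (n+1)‖ * σ ^ m * x ^ (-σ) ≤ g σ := by
    intro σ hσ
    obtain ⟨hσ0, hσδ⟩ := hσ
    have hσ1 : σ ≤ 1 := hσδ.trans (by norm_num)
    have ex : x ^ (-σ) = Real.exp (-(L * σ)) := by
      rw [Real.rpow_def_of_pos hx0]
      congr 1; rw [hLdef]; ring
    have hnorm := aux_norm_diff (n+1) hσ0 hσ1
    simp only [Nat.add_sub_cancel] at hnorm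
    have hpow := aux_pow_bound n hL1 hL0 hσ0 hσ1
    have hbase : (0:ℝ) ≤ σ ^ m * Real.exp (-(L * σ)) := by positivity
    have hfe : ‖((Real.log σ : ℂ) - Real.pi * Complex.I) ^ (n+1) -
          ((Real.log σ : ℂ) + Real.pi * Complex.I) ^ (n+1)‖ * σ ^ m * x ^ (-σ)
        = ‖((Real.log σ : ℂ) - Real.pi * Complex.I) ^ (n+1) -
          ((Real.log σ : ℂ) + Real.pi * Complex.I) ^ (n+1)‖ *
            (σ ^ m * Real.exp (-(L * σ))) := by
      rw [ex]; ring
    rw [hfe]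
    have step1 : ‖((Real.log σ : ℂ) - Real.pi * Complex.I) ^ (n+1) -
          ((Real.log σ : ℂ) + Real.pi * Complex.I) ^ (n+1)‖ *
            (σ ^ m * Real.exp (-(L * σ)))
        ≤ (2 * Real.pi * (n+1) * (Real.pi - Real.log σ) ^ n) *
            (σ ^ m * Real.exp (-(L * σ))) := by
      refine mul_le_mul_of_nonneg_right ?_ hbase
      convert hnorm using 2
      · rfl
      push_cast; ring
    refine step1.trans ?_
    have step2 : (2 * Real.pi * (n+1) * (Real.pi - Real.log σ) ^ n) *
            (σ ^ m * Real.exp (-(L * σ)))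
        ≤ (2 * Real.pi * (n+1) * (2 ^ n * ((Real.pi + 1) ^ n * Real.log L ^ n
            + (2 * n) ^ n * (L * σ) ^ c))) * (σ ^ m * Real.exp (-(L * σ))) := by
      refine mul_le_mul_of_nonneg_right (mul_le_mul_of_nonneg_left ?_ (by positivity)) hbase
      exact hpow
    refine step2.trans ?_
    have hsplit : (L * σ) ^ c * (σ ^ m * Real.exp (-(L * σ)))
        = L ^ c * (σ ^ ((m:ℝ) - 1/2) * Real.exp (-(L * σ))) := by
      rw [Real.mul_rpow hL0.le hσ0.le]
      have hσm : σ ^ c * (σ:ℝ) ^ m = σ ^ ((m:ℝ) - 1/2) := by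
        rw [← Real.rpow_natCast σ m, ← Real.rpow_add hσ0]
        congr 1; rw [hc]; ring
      calc L ^ c * σ ^ c * (σ ^ m * Real.exp (-(L * σ)))
          = L ^ c * ((σ ^ c * σ ^ m) * Real.exp (-(L * σ))) := by ring
      _ = L ^ c * (σ ^ ((m:ℝ) - 1/2) * Real.exp (-(L * σ))) := by rw [hσm]
    have expand : (2 * Real.pi * (n+1) * (2 ^ n * ((Real.pi + 1) ^ n * Real.log L ^ n
            + (2 * n) ^ n * (L * σ) ^ c))) * (σ ^ m * Real.exp (-(L * σ)))
        = K1 * W * (σ ^ m * Real.exp (-(L * σ)))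
          + K2 * ((L * σ) ^ c * (σ ^ m * Real.exp (-(L * σ)))) := by
      rw [hK1, hK2, hW]; push_cast; ring
    rw [expand, hsplit, hg]
    simp only [mul_assoc]
    exact le_rfl
  -- now the integral chain
  rw [intervalIntegral.integral_of_le (by norm_num : (0:ℝ) ≤ 1/10)]
  have chain1 : (∫ σ in Ioc (0:ℝ) (1/10),
      ‖((Real.log σ : ℂ) - Real.pi * Complex.I) ^ (n+1) -
          ((Real.log σ : ℂ) + Real.pi * Complex.I) ^ (n+1)‖ * σ ^ m * x ^ (-σ))
      ≤ ∫ σ in Ioc (0:ℝ) (1/10), g σ := by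
    refine integral_mono_of_nonneg ?_ (hgInt.mono_set Ioc_subset_Ioi_self) ?_
    · filter_upwards [ae_restrict_mem measurableSet_Ioc] with σ hσ
      have hσ0 : 0 < σ := hσ.1
      have : (0:ℝ) ≤ x ^ (-σ) := Real.rpow_nonneg hx0.le _
      positivity
    · filter_upwards [ae_restrict_mem measurableSet_Ioc] with σ hσ
      exact hptwise σ hσ
  refine chain1.trans ?_
  have chain2 : (∫ σ in Ioc (0:ℝ) (1/10), g σ) ≤ ∫ σ in Ioi (0:ℝ), g σ := by
    refine setIntegral_mono_set hgInt ?_ (HasSubset.Subset.eventuallyLE Ioc_subset_Ioi_self)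
    filter_upwards [ae_restrict_mem measurableSet_Ioi] with σ hσ
    exact hg0 σ hσ
  refine chain2.trans ?_
  -- evaluate the integral
  have hI1 : ∫ σ in Ioi (0:ℝ), σ ^ m * Real.exp (-(L * σ))
      = (1/L) ^ ((m:ℝ) + 1) * Real.Gamma ((m:ℝ) + 1) := by
    have h := Real.integral_rpow_mul_exp_neg_mul_Ioi
      (show (0:ℝ) < (m:ℝ) + 1 by positivity) hL0
    rw [show (m:ℝ) + 1 - 1 = (m:ℝ) by ring] at h
    simp_rw [Real.rpow_natCast] at h
    exact h
  have hI2 : ∫ σ in Ioi (0:ℝ), σ ^ ((m:ℝ) - 1/2) * Real.exp (-(L * σ))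
      = (1/L) ^ ((m:ℝ) + 1/2) * Real.Gamma ((m:ℝ) + 1/2) := by
    have h := Real.integral_rpow_mul_exp_neg_mul_Ioi
      (show (0:ℝ) < (m:ℝ) + 1/2 by positivity) hL0
    rw [show (m:ℝ) + 1/2 - 1 = (m:ℝ) - 1/2 by ring] at h
    exact h
  have hval : ∫ σ in Ioi (0:ℝ), g σ
      = K1 * W * ((1/L) ^ ((m:ℝ) + 1) * Real.Gamma ((m:ℝ) + 1))
        + K2 * L ^ c * ((1/L) ^ ((m:ℝ) + 1/2) * Real.Gamma ((m:ℝ) + 1/2)) := by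
    rw [hg]
    rw [integral_add (hint1.const_mul _) (hint2.const_mul _),
      integral_const_mul, integral_const_mul, hI1, hI2]
  rw [hval]
  -- final arithmetic
  have hre : ∀ a : ℝ, (1/L) ^ a = L ^ (-a) := fun a => by
    rw [one_div, ← Real.rpow_neg_one L, ← Real.rpow_mul hL0.le]
    congr 1; ring
  have hLpow : (0:ℝ) < L ^ (m+1) := pow_pos hL0 _
  have hnat : L ^ (-((m:ℝ) + 1)) = (L ^ (m+1:ℕ))⁻¹ := by
    rw [Real.rpow_neg hL0.le, ← Real.rpow_natCast L (m+1)]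
    push_cast; ring_nf
  have hcomb : L ^ c * (1/L) ^ ((m:ℝ) + 1/2) = (L ^ (m+1:ℕ))⁻¹ := by
    rw [hre, ← Real.rpow_add hL0, ← hnat]
    congr 1; rw [hc]; ring
  have e1 : K1 * W * ((1/L) ^ ((m:ℝ) + 1) * Real.Gamma ((m:ℝ) + 1))
      = K1 * Real.Gamma ((m:ℝ) + 1) * W / L ^ (m+1) := by
    rw [hre, hnat]; field_simp
  have e2 : K2 * L ^ c * ((1/L) ^ ((m:ℝ) + 1/2) * Real.Gamma ((m:ℝ) + 1/2))
      = K2 * Real.Gamma ((m:ℝ) + 1/2) / L ^ (m+1) := by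
    have : K2 * L ^ c * ((1/L) ^ ((m:ℝ) + 1/2) * Real.Gamma ((m:ℝ) + 1/2))
        = K2 * Real.Gamma ((m:ℝ) + 1/2) * (L ^ c * (1/L) ^ ((m:ℝ) + 1/2)) := by ring
    rw [this, hcomb]; field_simp
  rw [e1, e2]
  have hK2W : K2 * Real.Gamma ((m:ℝ) + 1/2) ≤ K2 * Real.Gamma ((m:ℝ) + 1/2) * W :=
    le_mul_of_one_le_right (by positivity) hW1
  have hCW : C * W = K1 * Real.Gamma ((m:ℝ) + 1) * W + K2 * Real.Gamma ((m:ℝ) + 1/2) * W := by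
    rw [hC]; ring
  have hnum : K1 * Real.Gamma ((m:ℝ) + 1) * W + K2 * Real.Gamma ((m:ℝ) + 1/2) ≤ C * W := by
    rw [hCW]
    linarith [hK2W]
  have hgoal : K1 * Real.Gamma ((m:ℝ) + 1) * W / L ^ (m+1)
        + K2 * Real.Gamma ((m:ℝ) + 1/2) / L ^ (m+1)
      ≤ C * W / L ^ (m+1) := by
    rw [← add_div]
    exact (div_le_div_iff_of_pos_right hLpow).mpr hnum
  refine hgoal.trans_eq ?_
  simp only [Nat.add_sub_cancel, hW]
end

section
/- For every integer j ≥ 1 there is a constant C_j > 0 such that for all integers N ≥ 1, all real numbers δ₁, …, δ_N with 0 < |δ_n| ≤ 1 for each n, and every real x ≥ 16, with δ = 1/10: ∫₀^δ | Σ_{n=1}^{N} log(σ + iδ_n) |^j · x^{−σ} dσ ≤ (C_j / log x) · ( min(N · log log x, log(1/Δ_N)) + Nπ )^j, where Δ_N = ∏_{n=1}^{N} |δ_n|. -/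
open Complex Real MeasureTheory intervalIntegral


lemma norm_log_le_aux {σ δ : ℝ} (hσ0 : 0 ≤ σ) (hσ1 : σ ≤ 1/10)
    (hδ0 : 0 < |δ|) (hδ1 : |δ| ≤ 1) :
    ‖Complex.log ((σ : ℂ) + (δ : ℝ) * Complex.I)‖ ≤ -Real.log (max σ |δ|) + π := by
  set z : ℂ := (σ : ℂ) + (δ : ℝ) * Complex.I with hz
  have hre : z.re = σ := by simp [hz]
  have him : z.im = δ := by simp [hz]
  have habs : ‖z‖ = Real.sqrt (σ^2 + δ^2) := by
    rw [hz, Complex.norm_add_mul_I]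
  have hmaxpos : 0 < max σ |δ| := lt_of_lt_of_le hδ0 (le_max_right _ _)
  have habs_ge : max σ |δ| ≤ ‖z‖ := by
    rw [habs]
    refine max_le ?_ ?_
    · calc σ = Real.sqrt (σ^2) := by rw [Real.sqrt_sq hσ0]
        _ ≤ _ := Real.sqrt_le_sqrt (by nlinarith [sq_nonneg δ])
    · calc |δ| = Real.sqrt (δ^2) := (Real.sqrt_sq_eq_abs δ).symm
        _ ≤ _ := Real.sqrt_le_sqrt (by nlinarith [sq_nonneg σ])
  have habs_le : ‖z‖ ≤ Real.sqrt 2 := by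
    rw [habs]
    refine Real.sqrt_le_sqrt ?_
    have h1 : σ^2 ≤ 1 := by nlinarith
    have h2 : δ^2 ≤ 1 := by nlinarith [_root_.sq_abs δ, abs_nonneg δ]
    linarith
  have habspos : 0 < ‖z‖ := lt_of_lt_of_le hmaxpos habs_ge
  have h1 : ‖Complex.log z‖ ≤ |Real.log (‖z‖)| + |Complex.arg z| := by
    calc ‖Complex.log z‖ = ‖Complex.log z‖ := rfl
      _ ≤ |(Complex.log z).re| + |(Complex.log z).im| := Complex.norm_le_abs_re_add_abs_im _
      _ = |Real.log (‖z‖)| + |Complex.arg z| := by rw [Complex.log_re, Complex.log_im]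
  have harg : |Complex.arg z| ≤ π/2 := Complex.abs_arg_le_pi_div_two_iff.2 (by rw [hre]; exact hσ0)
  have hlogup : Real.log (‖z‖) ≤ 1/2 := by
    calc Real.log (‖z‖) ≤ Real.log (Real.sqrt 2) := Real.log_le_log habspos habs_le
      _ = Real.log 2 / 2 := Real.log_sqrt (by norm_num)
      _ ≤ 1/2 := by
        have := Real.log_le_sub_one_of_pos (by norm_num : (0:ℝ) < 2)
        linarith
  have hlogdn : -Real.log (‖z‖) ≤ -Real.log (max σ |δ|) :=
    neg_le_neg (Real.log_le_log hmaxpos habs_ge)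
  have hmax1 : max σ |δ| ≤ 1 := max_le (by linarith) hδ1
  have hlognn : 0 ≤ -Real.log (max σ |δ|) := by
    simpa using neg_nonneg.2 (Real.log_nonpos (le_of_lt hmaxpos) hmax1)
  have habslog : |Real.log (‖z‖)| ≤ -Real.log (max σ |δ|) + 1/2 := by
    rcases abs_cases (Real.log (‖z‖)) with ⟨h, _⟩ | ⟨h, _⟩ <;> rw [h] <;> linarith
  have hpi : (1:ℝ)/2 + π/2 ≤ π := by
    have := Real.pi_gt_three; linarith
  linarith


lemma exp_neg_mul_intervalIntegrable (L a b : ℝ) :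
    IntervalIntegrable (fun σ => Real.exp (-(L*σ))) volume a b :=
  (Real.continuous_exp.comp (by continuity)).intervalIntegrable a b

lemma rpow_exp_intervalIntegrable (L a b : ℝ) :
    IntervalIntegrable (fun σ => σ ^ (-(1/2) : ℝ) * Real.exp (-(L*σ))) volume a b :=
  (intervalIntegrable_rpow' (by norm_num)).mul_continuousOn
    (Continuous.continuousOn (Real.continuous_exp.comp (by continuity)))

lemma integral_rpow_half (c : ℝ) (hc : 0 ≤ c) :
    ∫ σ in (0:ℝ)..c, σ ^ (-(1/2) : ℝ) = 2 * Real.sqrt c := by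
  rw [integral_rpow (Or.inl (by norm_num))]
  norm_num
  rw [Real.sqrt_eq_rpow]
  ring

lemma integral_rpow_exp_first (L c : ℝ) (hL : 0 ≤ L) (hc : 0 ≤ c) :
    ∫ σ in (0:ℝ)..c, σ ^ (-(1/2) : ℝ) * Real.exp (-(L*σ)) ≤ 2 * Real.sqrt c := by
  rw [← integral_rpow_half c hc]
  apply integral_mono_on hc (rpow_exp_intervalIntegrable L 0 c)
    (intervalIntegrable_rpow' (by norm_num))
  intro σ hσ
  have h1 : Real.exp (-(L*σ)) ≤ 1 := by
    rw [Real.exp_le_one_iff]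
    have := hσ.1
    nlinarith
  have h2 : (0:ℝ) ≤ σ ^ (-(1/2):ℝ) := Real.rpow_nonneg hσ.1 _
  nlinarith [Real.exp_pos (-(L*σ))]

lemma integral_exp_neg_mul_eq (L : ℝ) (hL : L ≠ 0) (a b : ℝ) :
    ∫ σ in a..b, Real.exp (-(L*σ)) = (Real.exp (-(L*a)) - Real.exp (-(L*b)))/L := by
  have h : ∀ σ : ℝ, Real.exp (-(L*σ)) = Real.exp ((-L)*σ) := by intro σ; ring_nf
  simp_rw [h]
  rw [intervalIntegral.integral_comp_mul_left (fun t => Real.exp t) (neg_ne_zero.2 hL),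
    integral_exp]
  have hc : ∀ y:ℝ, L * y * L⁻¹ = y := fun y => by
    rw [mul_comm L y, mul_assoc, mul_inv_cancel₀ hL, mul_one]
  field_simp
  ring_nf
  rw [hc, hc]

lemma integral_exp_neg_mul_le (L : ℝ) (hL : 0 < L) (a b : ℝ) :
    ∫ σ in a..b, Real.exp (-(L*σ)) ≤ Real.exp (-(L*a))/L := by
  rw [integral_exp_neg_mul_eq L hL.ne' a b]
  have hb : 0 < Real.exp (-(L*b)) := Real.exp_pos _
  gcongr
  linarith

lemma integral_rpow_exp_le (L : ℝ) (hL : 1 ≤ L) :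
    ∫ σ in (0:ℝ)..(1/10:ℝ), σ ^ (-(1/2) : ℝ) * Real.exp (-(L*σ)) ≤ 3 / Real.sqrt L := by
  have hL0 : 0 < L := by linarith
  have hsL : 0 < Real.sqrt L := Real.sqrt_pos.2 hL0
  by_cases h10 : L ≤ 10
  · calc ∫ σ in (0:ℝ)..(1/10:ℝ), σ ^ (-(1/2) : ℝ) * Real.exp (-(L*σ))
        ≤ 2 * Real.sqrt (1/10) := integral_rpow_exp_first L _ hL0.le (by norm_num)
      _ ≤ 3 / Real.sqrt L := by
          have h1 : Real.sqrt L ≤ Real.sqrt 10 := Real.sqrt_le_sqrt h10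
          have h2 : Real.sqrt (1/10) = 1 / Real.sqrt 10 := by
            rw [one_div, Real.sqrt_inv, one_div]
          have h3 : 0 < Real.sqrt 10 := Real.sqrt_pos.2 (by norm_num)
          rw [h2, mul_one_div, div_le_div_iff₀ h3 hsL]
          nlinarith
  · push_neg at h10
    have hinv : (0:ℝ) < 1/L := by positivity
    have hsplit : (1:ℝ)/L ≤ 1/10 := by
      rw [div_le_div_iff₀ hL0 (by norm_num)]; linarith
    rw [← intervalIntegral.integral_add_adjacent_intervals
      (rpow_exp_intervalIntegrable L 0 (1/L)) (rpow_exp_intervalIntegrable L (1/L) (1/10))]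
    have hfirst : ∫ σ in (0:ℝ)..(1/L:ℝ), σ ^ (-(1/2) : ℝ) * Real.exp (-(L*σ))
        ≤ 2 / Real.sqrt L := by
      have h := integral_rpow_exp_first L (1/L) hL0.le hinv.le
      have he : Real.sqrt (1/L) = 1 / Real.sqrt L := by
        rw [one_div, Real.sqrt_inv, one_div]
      rw [he, mul_one_div] at h
      exact h
    have hsecond : ∫ σ in (1/L:ℝ)..(1/10:ℝ), σ ^ (-(1/2) : ℝ) * Real.exp (-(L*σ))
        ≤ 1 / Real.sqrt L := by
      have hb1 : ∫ σ in (1/L:ℝ)..(1/10:ℝ), σ ^ (-(1/2) : ℝ) * Real.exp (-(L*σ))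
          ≤ ∫ σ in (1/L:ℝ)..(1/10:ℝ), Real.sqrt L * Real.exp (-(L*σ)) := by
        apply integral_mono_on hsplit (rpow_exp_intervalIntegrable L _ _)
          ((exp_neg_mul_intervalIntegrable L _ _).const_mul _)
        intro σ hσ
        have hσ0 : 0 < σ := lt_of_lt_of_le hinv hσ.1
        have : σ ^ (-(1/2):ℝ) ≤ (1/L) ^ (-(1/2):ℝ) :=
          Real.rpow_le_rpow_of_nonpos hinv hσ.1 (by norm_num)
        have heq : (1/L) ^ (-(1/2):ℝ) = Real.sqrt L := by
          rw [one_div, Real.inv_rpow hL0.le, Real.rpow_neg hL0.le, inv_inv,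
            ← Real.sqrt_eq_rpow]
        exact mul_le_mul_of_nonneg_right (heq ▸ this) (Real.exp_pos _).le
      have hb2 : ∫ σ in (1/L:ℝ)..(1/10:ℝ), Real.sqrt L * Real.exp (-(L*σ))
          ≤ Real.sqrt L * (Real.exp (-(L*(1/L)))/L) := by
        rw [intervalIntegral.integral_const_mul]
        exact mul_le_mul_of_nonneg_left (integral_exp_neg_mul_le L hL0 _ _) hsL.le
      have hb3 : Real.sqrt L * (Real.exp (-(L*(1/L)))/L) ≤ 1 / Real.sqrt L := by
        rw [mul_one_div_cancel hL0.ne']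
        have he : Real.exp (-1:ℝ) ≤ 1 := by
          rw [Real.exp_le_one_iff]; norm_num
        have hLL : Real.sqrt L * Real.sqrt L = L := Real.mul_self_sqrt hL0.le
        have heq : Real.sqrt L * (Real.exp (-1:ℝ)/L) = Real.exp (-1:ℝ) / Real.sqrt L := by
          field_simp
          exact Real.sq_sqrt hL0.le
        rw [heq]
        gcongr
      linarith
    have : 2 / Real.sqrt L + 1 / Real.sqrt L = 3 / Real.sqrt L := by ring
    linarith


lemma add_pow_le_two_pow (j : ℕ) {a b : ℝ} (ha : 0 ≤ a) (hb : 0 ≤ b) :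
    (a + b)^j ≤ 2^j * (a^j + b^j) := by
  have h1 : a + b ≤ 2 * max a b := by
    rcases max_cases a b with ⟨h, h'⟩ | ⟨h, h'⟩ <;> rw [h] <;> linarith
  calc (a+b)^j ≤ (2 * max a b)^j :=
        pow_le_pow_left₀ (by positivity) h1 j
    _ = 2^j * (max a b)^j := mul_pow 2 _ j
    _ ≤ 2^j * (a^j + b^j) := by
        apply mul_le_mul_of_nonneg_left ?_ (by positivity)
        rcases max_cases a b with ⟨h, _⟩ | ⟨h, _⟩ <;> rw [h] <;>
          [exact le_add_of_nonneg_right (by positivity);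
           exact le_add_of_nonneg_left (by positivity)]

lemma max_neg_log_pow_le (j : ℕ) (hj : 1 ≤ j) {t : ℝ} (ht : 0 < t) :
    (max 0 (-Real.log t))^j ≤ (2*(j:ℝ))^j * t ^ (-(1/2) : ℝ) := by
  rcases le_or_gt 1 t with h1 | h1
  · have : max 0 (-Real.log t) = 0 := max_eq_left (by simpa using Real.log_nonneg h1)
    rw [this, zero_pow (by omega)]
    positivity
  · have hlog : 0 ≤ -Real.log t := by simpa using Real.log_nonpos ht.le h1.le
    have hmax : max 0 (-Real.log t) = -Real.log t := max_eq_right hlog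
    rw [hmax]
    have hkey : -Real.log t ≤ 2*(j:ℝ) * t ^ (-(1/(2*(j:ℝ)))) := by
      have hjpos : (0:ℝ) < 2*(j:ℝ) := by positivity
      have h2 : -Real.log t = Real.log t⁻¹ := (Real.log_inv t).symm
      have h3 : Real.log t⁻¹ = 2*(j:ℝ) * Real.log (t⁻¹ ^ (1/(2*(j:ℝ)))) := by
        rw [Real.log_rpow (by positivity)]
        field_simp
      have h4 : Real.log (t⁻¹ ^ (1/(2*(j:ℝ)))) ≤ t⁻¹ ^ (1/(2*(j:ℝ))) := by
        have := Real.log_le_sub_one_of_pos (x := t⁻¹ ^ (1/(2*(j:ℝ)))) (by positivity)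
        linarith
      have h5 : t⁻¹ ^ (1/(2*(j:ℝ))) = t ^ (-(1/(2*(j:ℝ)))) := by
        rw [Real.inv_rpow ht.le, ← Real.rpow_neg ht.le]
      rw [h2, h3]
      calc 2*(j:ℝ) * Real.log (t⁻¹ ^ (1/(2*(j:ℝ)))) ≤ 2*(j:ℝ) * (t⁻¹ ^ (1/(2*(j:ℝ)))) :=
            mul_le_mul_of_nonneg_left h4 (by positivity)
        _ = 2*(j:ℝ) * t ^ (-(1/(2*(j:ℝ)))) := by rw [h5]
    calc (-Real.log t)^j ≤ (2*(j:ℝ) * t ^ (-(1/(2*(j:ℝ)))))^j :=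
          pow_le_pow_left₀ hlog hkey j
      _ = (2*(j:ℝ))^j * (t ^ (-(1/(2*(j:ℝ)))))^j := mul_pow _ _ j
      _ = (2*(j:ℝ))^j * t ^ (-(1/2) : ℝ) := by
          congr 1
          rw [← Real.rpow_natCast (t ^ (-(1/(2*(j:ℝ))))) j, ← Real.rpow_mul ht.le]
          congr 1
          have hjne : (j:ℝ) ≠ 0 := by positivity
          field_simp


/-- **Lemma 6.3** (Meng): for every `j ≥ 1` there is `C_j > 0` such that for all `N ≥ 1`,
all `δ₁, …, δ_N` with `0 < |δ_n| ≤ 1`, and all `x ≥ 16`, with `δ = 1/10`,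
`∫₀^δ |∑_{n=1}^N log(σ + iδ_n)|^j x^{-σ} dσ
  ≤ (C_j / log x) (min(N log log x, log(1/Δ_N)) + Nπ)^j`, where `Δ_N = ∏ |δ_n|`. -/
theorem log_sum_integral_estimate (j : ℕ) (hj : 1 ≤ j) :
    ∃ C : ℝ, 0 < C ∧
      ∀ N : ℕ, 1 ≤ N → ∀ d : Fin N → ℝ, (∀ n, 0 < |d n| ∧ |d n| ≤ 1) →
        ∀ x : ℝ, 16 ≤ x →
          (∫ σ in (0:ℝ)..(1/10 : ℝ),
              ‖∑ n : Fin N, Complex.log ((σ : ℂ) + (d n : ℝ) * Complex.I)‖ ^ j * x ^ (-σ))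
            ≤ (C / Real.log x) *
                (min ((N : ℝ) * Real.log (Real.log x)) (Real.log (1 / ∏ n : Fin N, |d n|))
                  + (N : ℝ) * Real.pi) ^ j := by
  refine ⟨2^j * (1 + 3*(2*(j:ℝ))^j), by positivity, ?_⟩
  intro N hN d hd x hx
  set L := Real.log x with hLdef
  have hx0 : (0:ℝ) < x := by linarith
  have hL16 : Real.log 16 ≤ L := Real.log_le_log (by norm_num) hx
  have hL27 : (2.772:ℝ) ≤ L := by
    have h2 : (0.6931471803:ℝ) < Real.log 2 := Real.log_two_gt_d9
    have h16 : Real.log 16 = 4 * Real.log 2 := by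
      rw [show (16:ℝ) = 2^4 by norm_num, Real.log_pow]
      push_cast; ring
    linarith
  have hL0 : (0:ℝ) < L := by linarith
  have hLe : Real.exp 1 ≤ L := by
    have h9 := Real.exp_one_lt_d9
    linarith
  have hlogL1 : 1 ≤ Real.log L := by
    calc (1:ℝ) = Real.log (Real.exp 1) := (Real.log_exp 1).symm
      _ ≤ Real.log L := Real.log_le_log (Real.exp_pos 1) hLe
  have hN1 : (1:ℝ) ≤ (N:ℝ) := by exact_mod_cast hN
  have hΔpos : 0 < ∏ n : Fin N, |d n| := Finset.prod_pos fun n _ => (hd n).1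
  have hΔle1 : (∏ n : Fin N, |d n|) ≤ 1 :=
    Finset.prod_le_one (fun n _ => (abs_nonneg _)) (fun n _ => (hd n).2)
  have hlogΔ : 0 ≤ Real.log (1 / ∏ n : Fin N, |d n|) :=
    Real.log_nonneg (by rw [le_div_iff₀ hΔpos]; linarith)
  have hminnn : 0 ≤ min ((N:ℝ) * Real.log L) (Real.log (1 / ∏ n : Fin N, |d n|)) :=
    le_min (by positivity) hlogΔ
  have hRHSnn : 0 ≤ (2^j * (1 + 3*(2*(j:ℝ))^j) / L) *
      (min ((N:ℝ) * Real.log L) (Real.log (1 / ∏ n : Fin N, |d n|)) + (N:ℝ)*π)^j := by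
    apply mul_nonneg (by positivity)
    apply pow_nonneg
    have := Real.pi_pos
    positivity
  have hrw : ∀ σ : ℝ, x ^ (-σ) = Real.exp (-(L*σ)) := by
    intro σ
    rw [Real.rpow_def_of_pos hx0, mul_neg]
  simp only [hrw]
  by_cases hint : IntervalIntegrable
      (fun σ : ℝ => ‖∑ n : Fin N, Complex.log ((σ : ℂ) + (d n : ℝ) * Complex.I)‖ ^ j *
        Real.exp (-(L*σ))) volume 0 (1/10)
  swap
  · rw [intervalIntegral.integral_undef hint]
    exact hRHSnn
  -- pointwise norm bound
  have hnormle : ∀ σ ∈ Set.Icc (0:ℝ) (1/10),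
      ‖∑ n : Fin N, Complex.log ((σ : ℂ) + (d n : ℝ) * Complex.I)‖
        ≤ (∑ n : Fin N, -Real.log (max σ |d n|)) + (N:ℝ) * π := by
    intro σ hσ
    calc ‖∑ n : Fin N, Complex.log ((σ : ℂ) + (d n : ℝ) * Complex.I)‖
        ≤ ∑ n : Fin N, ‖Complex.log ((σ : ℂ) + (d n : ℝ) * Complex.I)‖ :=
          norm_sum_le _ _
      _ ≤ ∑ n : Fin N, (-Real.log (max σ |d n|) + π) :=
          Finset.sum_le_sum fun n _ => norm_log_le_aux hσ.1 hσ.2 (hd n).1 (hd n).2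
      _ = (∑ n : Fin N, -Real.log (max σ |d n|)) + (N:ℝ) * π := by
          rw [Finset.sum_add_distrib, Finset.sum_const, Finset.card_univ, Fintype.card_fin,
            nsmul_eq_mul]
  have hsumA : ∀ σ : ℝ, 0 ≤ σ → (∑ n : Fin N, -Real.log (max σ |d n|))
      ≤ Real.log (1 / ∏ n : Fin N, |d n|) := by
    intro σ hσ
    have h1 : (∑ n : Fin N, -Real.log (max σ |d n|)) ≤ ∑ n : Fin N, -Real.log |d n| :=
      Finset.sum_le_sum fun n _ => neg_le_neg (Real.log_le_log (hd n).1 (le_max_right _ _))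
    have h2 : (∑ n : Fin N, -Real.log |d n|) = Real.log (1 / ∏ n : Fin N, |d n|) := by
      rw [Finset.sum_neg_distrib, one_div, Real.log_inv,
        Real.log_prod (fun n _ => ((hd n).1).ne')]
    linarith
  have hsumB : ∀ σ : ℝ, 0 < σ → (∑ n : Fin N, -Real.log (max σ |d n|))
      ≤ (N:ℝ) * (-Real.log σ) := by
    intro σ hσ
    calc (∑ n : Fin N, -Real.log (max σ |d n|)) ≤ ∑ n : Fin N, -Real.log σ :=
          Finset.sum_le_sum fun n _ => neg_le_neg (Real.log_le_log hσ (le_max_left _ _))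
      _ = (N:ℝ) * (-Real.log σ) := by
          rw [Finset.sum_const, Finset.card_univ, Fintype.card_fin, nsmul_eq_mul]
  have hpi := Real.pi_pos
  rcases le_total (Real.log (1 / ∏ n : Fin N, |d n|)) ((N:ℝ) * Real.log L) with hmin | hmin
  -- Case A : min is log(1/Δ)
  · rw [min_eq_right hmin]
    set M := Real.log (1 / ∏ n : Fin N, |d n|) with hM
    have hbound : ∀ σ ∈ Set.Icc (0:ℝ) (1/10),
        ‖∑ n : Fin N, Complex.log ((σ : ℂ) + (d n : ℝ) * Complex.I)‖ ^ j * Real.exp (-(L*σ))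
          ≤ (M + (N:ℝ)*π)^j * Real.exp (-(L*σ)) := by
      intro σ hσ
      apply mul_le_mul_of_nonneg_right ?_ (Real.exp_pos _).le
      apply pow_le_pow_left₀ (norm_nonneg _)
      calc ‖∑ n : Fin N, Complex.log ((σ : ℂ) + (d n : ℝ) * Complex.I)‖
          ≤ (∑ n : Fin N, -Real.log (max σ |d n|)) + (N:ℝ) * π := hnormle σ hσ
        _ ≤ M + (N:ℝ)*π := by
            have := hsumA σ hσ.1; linarith
    calc (∫ σ in (0:ℝ)..(1/10:ℝ),
          ‖∑ n : Fin N, Complex.log ((σ : ℂ) + (d n : ℝ) * Complex.I)‖ ^ j * Real.exp (-(L*σ)))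
        ≤ ∫ σ in (0:ℝ)..(1/10:ℝ), (M + (N:ℝ)*π)^j * Real.exp (-(L*σ)) :=
          intervalIntegral.integral_mono_on (by norm_num) hint
            ((exp_neg_mul_intervalIntegrable L 0 (1/10)).const_mul _) hbound
      _ = (M + (N:ℝ)*π)^j * ∫ σ in (0:ℝ)..(1/10:ℝ), Real.exp (-(L*σ)) :=
          intervalIntegral.integral_const_mul _ _
      _ ≤ (M + (N:ℝ)*π)^j * (1/L) := by
          apply mul_le_mul_of_nonneg_left ?_ (by positivity)
          have := integral_exp_neg_mul_le L hL0 0 (1/10)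
          simpa using this
      _ ≤ (2^j * (1 + 3*(2*(j:ℝ))^j) / L) * (M + (N:ℝ)*π)^j := by
          have hC1 : (1:ℝ) ≤ 2^j * (1 + 3*(2*(j:ℝ))^j) := by
            have h1 : (1:ℝ) ≤ 2^j := by
              calc (1:ℝ) = 1^j := (one_pow j).symm
                _ ≤ 2^j := pow_le_pow_left₀ (by norm_num) (by norm_num) j
            have h2 : (0:ℝ) ≤ 3*(2*(j:ℝ))^j := by positivity
            nlinarith
          have hMnn : (0:ℝ) ≤ (M + (N:ℝ)*π)^j := by
            apply pow_nonneg
            have : (0:ℝ) ≤ (N:ℝ)*π := by positivity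
            linarith
          rw [mul_one_div, div_mul_eq_mul_div]
          gcongr
          nlinarith
  · rw [min_eq_left hmin]
    have hsL : 0 < Real.sqrt L := Real.sqrt_pos.2 hL0
    have hLL : Real.sqrt L * Real.sqrt L = L := Real.mul_self_sqrt hL0.le
    set A := Real.log L + π with hA
    have hA1 : (1:ℝ) ≤ A := by rw [hA]; linarith
    have hA0 : (0:ℝ) ≤ A := by linarith
    have hAj : (1:ℝ) ≤ A^j := by
      calc (1:ℝ) = 1^j := (one_pow j).symm
        _ ≤ A^j := pow_le_pow_left₀ (by norm_num) hA1 j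
    set c1 : ℝ := (N:ℝ)^j * 2^j * A^j with hc1
    set c2 : ℝ := (N:ℝ)^j * 2^j * (2*(j:ℝ))^j * (Real.sqrt L)⁻¹ with hc2
    have hc1nn : 0 ≤ c1 := by rw [hc1]; positivity
    have hc2nn : 0 ≤ c2 := by rw [hc2]; positivity
    have hgint1 : IntervalIntegrable (fun σ : ℝ => c1 * Real.exp (-(L*σ))) volume 0 (1/10) :=
      (exp_neg_mul_intervalIntegrable L 0 (1/10)).const_mul c1
    have hgint2 : IntervalIntegrable
        (fun σ : ℝ => c2 * (σ ^ (-(1/2):ℝ) * Real.exp (-(L*σ)))) volume 0 (1/10) :=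
      (rpow_exp_intervalIntegrable L 0 (1/10)).const_mul c2
    have hgint : IntervalIntegrable
        (fun σ : ℝ => c1 * Real.exp (-(L*σ)) + c2 * (σ ^ (-(1/2):ℝ) * Real.exp (-(L*σ))))
        volume 0 (1/10) := hgint1.add hgint2
    have hae : (fun σ : ℝ => ‖∑ n : Fin N, Complex.log ((σ : ℂ) + (d n : ℝ) * Complex.I)‖ ^ j *
          Real.exp (-(L*σ)))
        ≤ᵐ[volume.restrict (Set.Icc (0:ℝ) (1/10))]
        (fun σ : ℝ => c1 * Real.exp (-(L*σ)) + c2 * (σ ^ (-(1/2):ℝ) * Real.exp (-(L*σ)))) := by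
      have h0 : ∀ᵐ σ ∂(volume.restrict (Set.Icc (0:ℝ) (1/10))), σ ≠ 0 := by
        apply ae_restrict_of_ae
        rw [ae_iff]
        have hset : {σ : ℝ | ¬ σ ≠ 0} = {0} := by ext σ; simp
        rw [hset]
        exact measure_singleton 0
      have hmem : ∀ᵐ σ ∂(volume.restrict (Set.Icc (0:ℝ) (1/10))), σ ∈ Set.Icc (0:ℝ) (1/10) :=
        ae_restrict_mem measurableSet_Icc
      filter_upwards [h0, hmem] with σ hσ0 hσmem
      have hσpos : 0 < σ := lt_of_le_of_ne hσmem.1 (Ne.symm hσ0)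
      have hexpnn : (0:ℝ) ≤ Real.exp (-(L*σ)) := (Real.exp_pos _).le
      have hlogσ : Real.log σ ≤ 0 := Real.log_nonpos hσpos.le (by linarith [hσmem.2])
      have hB0 : (0:ℝ) ≤ max 0 (-Real.log (σ*L)) := le_max_left _ _
      have hfb : ‖∑ n : Fin N, Complex.log ((σ : ℂ) + (d n : ℝ) * Complex.I)‖
          ≤ (N:ℝ) * ((-Real.log σ) + π) := by
        have h1 := hnormle σ hσmem
        have h2 := hsumB σ hσpos
        have h3 : (N:ℝ)*((-Real.log σ)+π) = (N:ℝ)*(-Real.log σ) + (N:ℝ)*π := mul_add _ _ _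
        linarith
      have hkey : (-Real.log σ) + π ≤ A + max 0 (-Real.log (σ*L)) := by
        have hm : Real.log (σ * L) = Real.log σ + Real.log L := Real.log_mul hσpos.ne' hL0.ne'
        have h2 : -Real.log (σ*L) ≤ max 0 (-Real.log (σ*L)) := le_max_right _ _
        rw [hA]
        linarith
      have hfb2 : ‖∑ n : Fin N, Complex.log ((σ : ℂ) + (d n : ℝ) * Complex.I)‖
          ≤ (N:ℝ) * (A + max 0 (-Real.log (σ*L))) := by
        calc ‖∑ n : Fin N, Complex.log ((σ : ℂ) + (d n : ℝ) * Complex.I)‖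
            ≤ (N:ℝ) * ((-Real.log σ) + π) := hfb
          _ ≤ (N:ℝ) * (A + max 0 (-Real.log (σ*L))) :=
              mul_le_mul_of_nonneg_left hkey (by positivity)
      have hmaxpow : (max 0 (-Real.log (σ*L)))^j ≤ (2*(j:ℝ))^j * (σ*L) ^ (-(1/2):ℝ) :=
        max_neg_log_pow_le j hj (by positivity)
      have hsplitrpow : (σ*L) ^ (-(1/2):ℝ) = σ ^ (-(1/2):ℝ) * (Real.sqrt L)⁻¹ := by
        rw [Real.mul_rpow hσpos.le hL0.le]
        congr 1
        rw [Real.rpow_neg hL0.le, Real.sqrt_eq_rpow]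
      calc ‖∑ n : Fin N, Complex.log ((σ : ℂ) + (d n : ℝ) * Complex.I)‖ ^ j * Real.exp (-(L*σ))
          ≤ ((N:ℝ) * (A + max 0 (-Real.log (σ*L))))^j * Real.exp (-(L*σ)) :=
            mul_le_mul_of_nonneg_right (pow_le_pow_left₀ (norm_nonneg _) hfb2 j) hexpnn
        _ = (N:ℝ)^j * (A + max 0 (-Real.log (σ*L)))^j * Real.exp (-(L*σ)) := by
            rw [mul_pow]
        _ ≤ (N:ℝ)^j * (2^j * (A^j + (max 0 (-Real.log (σ*L)))^j)) * Real.exp (-(L*σ)) := by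
            apply mul_le_mul_of_nonneg_right ?_ hexpnn
            exact mul_le_mul_of_nonneg_left (add_pow_le_two_pow j hA0 hB0) (by positivity)
        _ ≤ (N:ℝ)^j * (2^j * (A^j + (2*(j:ℝ))^j * (σ ^ (-(1/2):ℝ) * (Real.sqrt L)⁻¹)))
              * Real.exp (-(L*σ)) := by
            apply mul_le_mul_of_nonneg_right ?_ hexpnn
            apply mul_le_mul_of_nonneg_left ?_ (by positivity)
            apply mul_le_mul_of_nonneg_left ?_ (by positivity)
            apply add_le_add_right
            rw [← hsplitrpow]
            exact hmaxpow
        _ = c1 * Real.exp (-(L*σ)) + c2 * (σ ^ (-(1/2):ℝ) * Real.exp (-(L*σ))) := by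
            rw [hc1, hc2]; ring
    calc (∫ σ in (0:ℝ)..(1/10:ℝ),
          ‖∑ n : Fin N, Complex.log ((σ : ℂ) + (d n : ℝ) * Complex.I)‖ ^ j * Real.exp (-(L*σ)))
        ≤ ∫ σ in (0:ℝ)..(1/10:ℝ),
            (c1 * Real.exp (-(L*σ)) + c2 * (σ ^ (-(1/2):ℝ) * Real.exp (-(L*σ)))) :=
          intervalIntegral.integral_mono_ae_restrict (by norm_num) hint hgint hae
      _ = c1 * (∫ σ in (0:ℝ)..(1/10:ℝ), Real.exp (-(L*σ)))
            + c2 * (∫ σ in (0:ℝ)..(1/10:ℝ), σ ^ (-(1/2):ℝ) * Real.exp (-(L*σ))) := by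
          rw [intervalIntegral.integral_add hgint1 hgint2,
            intervalIntegral.integral_const_mul, intervalIntegral.integral_const_mul]
      _ ≤ c1 * (1/L) + c2 * (3/Real.sqrt L) := by
          apply add_le_add
          · apply mul_le_mul_of_nonneg_left ?_ hc1nn
            have := integral_exp_neg_mul_le L hL0 0 (1/10)
            simpa using this
          · exact mul_le_mul_of_nonneg_left (integral_rpow_exp_le L (by linarith)) hc2nn
      _ ≤ (2^j * (1 + 3*(2*(j:ℝ))^j) / L) * ((N:ℝ) * Real.log L + (N:ℝ)*π)^j := by
          have hNA : (N:ℝ) * Real.log L + (N:ℝ)*π = (N:ℝ) * A := by rw [hA]; ring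
          rw [hNA, mul_pow (N:ℝ) A j, div_mul_eq_mul_div, le_div_iff₀ hL0]
          have e1 : (c1 * (1/L) + c2*(3/Real.sqrt L)) * L
              = (N:ℝ)^j * 2^j * A^j + 3*((N:ℝ)^j * 2^j * (2*(j:ℝ))^j) := by
            rw [hc1, hc2, ← hLL]
            field_simp
            simp only [Real.sqrt_sq hsL.le]
            ring
          rw [e1]
          have hfact : 3*((N:ℝ)^j * 2^j * (2*(j:ℝ))^j) * 1
              ≤ 3*((N:ℝ)^j * 2^j * (2*(j:ℝ))^j) * A^j :=
            mul_le_mul_of_nonneg_left hAj (by positivity)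
          nlinarith [hfact]
end

section
/- Let A and B be disjoint finite sets with |A| < |B|. For an integer k ≥ 1, let d_k be the number of multisets of size k with elements drawn from A ∪ B that contain an even number of elements of B (counted with multiplicity) minus the number of such multisets that contain an odd number of elements of B; equivalently, d_k = Σ_{j=0}^{k} (−1)^j · binom(|A| + (k − j) − 1, k − j) · binom(|B| + j − 1, j). Then (−1)^k · d_k > 0 for every k ≥ 1. -/
open Finset

private def E (a b k : ℕ) : ℤ :=
  ∑ j ∈ Finset.range (k+1),
    (-1:ℤ)^j * ((a + j - 1).choose j : ℤ) * ((b + (k - j) - 1).choose (k - j) : ℤ)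

private lemma E_zero (a b : ℕ) : E a b 0 = 1 := by
  simp [E]

private lemma E_one (a b : ℕ) : E a b 1 = (b : ℤ) - a := by
  simp [E, Finset.sum_range_succ]
  ring

private lemma E_left (b k : ℕ) : E 0 b k = ((b + k - 1).choose k : ℤ) := by
  unfold E
  rw [Finset.sum_eq_single 0]
  · simp
  · intro j hj hj0
    have h1 : (0 + j - 1).choose j = 0 :=
      Nat.choose_eq_zero_of_lt (by omega)
    rw [h1]
    simp
  · intro h; simp at h

-- Pascal recurrence in b
private lemma lemB (a b k : ℕ) : E a (b+1) (k+1) = E a b (k+1) + E a (b+1) k := by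
  unfold E
  have key : ∀ j ∈ Finset.range (k+2),
      (-1:ℤ)^j * ((a + j - 1).choose j : ℤ) * (((b+1) + (k+1 - j) - 1).choose (k+1-j) : ℤ)
      = (-1:ℤ)^j * ((a + j - 1).choose j : ℤ) * ((b + (k+1 - j) - 1).choose (k+1-j) : ℤ)
        + (if j ≤ k then (-1:ℤ)^j * ((a + j - 1).choose j : ℤ) *
            (((b+1) + (k - j) - 1).choose (k-j) : ℤ) else 0) := by
    intro j hj
    rw [Finset.mem_range] at hj
    by_cases hjk : j ≤ k
    · rw [if_pos hjk]
      obtain ⟨i, rfl⟩ : ∃ i, k = j + i := ⟨k - j, by omega⟩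
      rw [show j + i + 1 - j = i + 1 from by omega,
          show j + i - j = i from by omega,
          show b + 1 + (i+1) - 1 = b + i + 1 from by omega,
          show b + (i+1) - 1 = b + i from by omega,
          show b + 1 + i - 1 = b + i from by omega,
          show b + i + 1 = (b + i) + 1 from rfl,
          Nat.choose_succ_succ (b+i) i]
      push_cast
      ring
    · rw [if_neg hjk]
      have : j = k + 1 := by omega
      subst this
      simp
  rw [Finset.sum_congr rfl key, Finset.sum_add_distrib]
  congr 1
  rw [Finset.sum_range_succ, if_neg (by omega)]
  rw [add_zero]
  apply Finset.sum_congr rfl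
  intro j hj
  rw [Finset.mem_range] at hj
  rw [if_pos (by omega)]

-- Pascal recurrence in a
private lemma lemA (a b k : ℕ) : E (a+1) b (k+1) = E a b (k+1) - E (a+1) b k := by
  unfold E
  rw [Finset.sum_range_succ' (fun j => (-1:ℤ)^j * (((a+1) + j - 1).choose j : ℤ) *
        ((b + (k+1 - j) - 1).choose (k+1-j) : ℤ)) (k+1),
      Finset.sum_range_succ' (fun j => (-1:ℤ)^j * ((a + j - 1).choose j : ℤ) *
        ((b + (k+1 - j) - 1).choose (k+1-j) : ℤ)) (k+1)]
  have h0 : ((a + 1 + 0 - 1).choose 0 : ℤ) = ((a + 0 - 1).choose 0 : ℤ) := by simp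
  have key : ∀ j ∈ Finset.range (k+1),
      (-1:ℤ)^(j+1) * (((a+1) + (j+1) - 1).choose (j+1) : ℤ) *
        ((b + (k+1 - (j+1)) - 1).choose (k+1-(j+1)) : ℤ)
      = (-1:ℤ)^(j+1) * ((a + (j+1) - 1).choose (j+1) : ℤ) *
          ((b + (k+1 - (j+1)) - 1).choose (k+1-(j+1)) : ℤ)
        - (-1:ℤ)^j * (((a+1) + j - 1).choose j : ℤ) * ((b + (k - j) - 1).choose (k-j) : ℤ) := by
    intro j hj
    rw [Finset.mem_range] at hj
    rw [show a + 1 + (j+1) - 1 = (a + j) + 1 from by omega,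
        show a + (j+1) - 1 = a + j from by omega,
        show a + 1 + j - 1 = a + j from by omega,
        show k + 1 - (j + 1) = k - j from by omega,
        Nat.choose_succ_succ (a+j) j]
    push_cast
    ring
  rw [Finset.sum_congr rfl key, Finset.sum_sub_distrib]
  simp only [h0]
  ring

private lemma E_diag (a : ℕ) : ∀ k, 0 ≤ E a a k := by
  induction a with
  | zero =>
    intro k
    rw [E_left]
    positivity
  | succ a ih =>
    intro k
    induction k using Nat.strong_induction_on with
    | _ k ihk =>
      match k with
      | 0 => rw [E_zero]; norm_num
      | 1 => rw [E_one]; simp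
      | (m+2) =>
        have h1 : E (a+1) (a+1) (m+2) = E a (a+1) (m+2) - E (a+1) (a+1) (m+1) :=
          lemA a (a+1) (m+1)
        have h2 : E a (a+1) (m+2) = E a a (m+2) + E a (a+1) (m+1) := lemB a a (m+1)
        have h3 : E (a+1) (a+1) (m+1) = E a (a+1) (m+1) - E (a+1) (a+1) m :=
          lemA a (a+1) m
        have h4 : E (a+1) (a+1) (m+2) = E a a (m+2) + E (a+1) (a+1) m := by
          rw [h1, h2, h3]; ring
        rw [h4]
        have := ih (m+2)
        have := ihk m (by omega)
        omega

private lemma E_pos : ∀ k a b, a < b → 0 < E a b k := by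
  intro k
  induction k using Nat.strong_induction_on with
  | _ k ihk =>
    intro a b hab
    match k with
    | 0 => rw [E_zero]; norm_num
    | (k+1) =>
      induction b, hab using Nat.le_induction with
      | base =>
        show 0 < E a (a+1) (k+1)
        rw [lemB a a k]
        have h1 := E_diag a (k+1)
        have h2 : 0 < E a (a+1) k := ihk k (by omega) a (a+1) (by omega)
        omega
      | succ b hb ihb =>
        rw [lemB a b k]
        have h2 : 0 < E a (b+1) k := ihk k (by omega) a (b+1) (by omega)
        omega

/-- **Combinatorial bias lemma** (cf. Meng, §2.4): if `A` and `B` are disjoint finite sets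
with `|A| < |B|`, and `d_k` is the signed count of multisets of size `k` from `A ∪ B`
(counted `+1` when the number of elements from `B`, with multiplicity, is even, `-1` when
odd), i.e. `d_k = ∑_{j=0}^k (-1)^j C(|A|+(k-j)-1, k-j) C(|B|+j-1, j)`, then
`(-1)^k d_k > 0` for all `k ≥ 1`. -/
theorem alternating_multiset_count_pos {α : Type*} [DecidableEq α] (A B : Finset α)
    (hdisj : Disjoint A B) (hcard : A.card < B.card) (k : ℕ) (hk : 1 ≤ k) :
    0 < (-1 : ℤ) ^ k *
        ∑ j ∈ Finset.range (k + 1),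
          (-1 : ℤ) ^ j * ((A.card + (k - j) - 1).choose (k - j) : ℤ) *
            ((B.card + j - 1).choose j : ℤ) := by
  set a := A.card
  set b := B.card
  have heq : (-1 : ℤ) ^ k *
        ∑ j ∈ Finset.range (k + 1),
          (-1 : ℤ) ^ j * ((a + (k - j) - 1).choose (k - j) : ℤ) *
            ((b + j - 1).choose j : ℤ) = E a b k := by
    unfold E
    rw [← Finset.sum_range_reflect, Finset.mul_sum]
    apply Finset.sum_congr rfl
    intro j hj
    rw [Finset.mem_range] at hj
    rw [show k + 1 - 1 - j = k - j from by omega,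
        show k - (k - j) = j from by omega]
    rw [show (-1:ℤ)^k * ((-1)^(k-j) * ((a + j - 1).choose j : ℤ) * ((b + (k-j) - 1).choose (k-j) : ℤ))
        = (-1:ℤ)^(k + (k-j)) * ((a + j - 1).choose j : ℤ) * ((b + (k-j) - 1).choose (k-j) : ℤ)
        from by rw [pow_add]; ring,
        show k + (k - j) = 2*(k-j) + j from by omega,
        pow_add, pow_mul]
    norm_num
  rw [heq]
  exact E_pos k a b hcard
end
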